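/- arXiv:2605.23821 — 5 statements merged into one kernel-verified Lean document; each statement's English description precedes it below -/
import Mathlib

section
/- The collection of all scaling modes φ_0,...,φ_L together with all wavelet modes ψ_{u,r} (over internal nodes u and relative depths 1 ≤ r ≤ h(u)) forms an orthonormal basis of the space of real-valued functions on the nodes of the full binary tree of depth L. -/
/-- Nodes of the full (perfect) binary tree of depth `L`: a node is a depth `ℓ ≤ L`
together with an index among the `2^ℓ` nodes at that depth.  The children of node
`(ℓ, k)` are `(ℓ+1, 2k)` and `(ℓ+1, 2k+1)`. -/
abbrev BTNode (L : ℕ) := Σ ℓ : Fin (L + 1), Fin (2 ^ (ℓ : ℕ))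

namespace BTNode

variable {L : ℕ}

/-- Depth of a node. -/
def depth (n : BTNode L) : ℕ := n.1

/-- Index (among the `2^a` nodes at depth `a`) of the ancestor of `n` at depth
`a ≤ depth n`. -/
def anc (n : BTNode L) (a : ℕ) : ℕ := (n.2 : ℕ) / 2 ^ (depth n - a)

/-- Depth of the lowest common ancestor of two nodes. -/
def lcaDepth (i j : BTNode L) : ℕ :=
  Nat.findGreatest (fun a => anc i a = anc j a) (min (depth i) (depth j))

/-- Graph distance on the tree: `dist i j = depth i + depth j - 2·depth(LCA)`. -/
def dist (i j : BTNode L) : ℕ := depth i + depth j - 2 * lcaDepth i j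

/-- `i` is an ancestor of (or equal to) `j`. -/
def IsAncestor (i j : BTNode L) : Prop :=
  depth i ≤ depth j ∧ anc j (depth i) = (i.2 : ℕ)

/-- `n` lies in the subtree `T(u)` rooted at `u`. -/
def InSubtree (u n : BTNode L) : Prop := IsAncestor u n

/-- Scaling mode `φ_ℓ`: normalized indicator of the depth-`ℓ` layer, with value
`2^{-ℓ/2}` on that layer. -/
noncomputable def scalingMode (ℓ : Fin (L + 1)) (n : BTNode L) : ℝ :=
  if depth n = (ℓ : ℕ) then ((Real.sqrt 2)⁻¹) ^ (ℓ : ℕ) else 0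

/-- Haar wavelet mode `ψ_{u,r}`: supported on the descendants of `u` at relative depth
`r`, with value `+2^{-r/2}` below the first child of `u` (even child index) and
`-2^{-r/2}` below the second child (odd child index). -/
noncomputable def waveletMode (u : BTNode L) (r : ℕ) (n : BTNode L) : ℝ :=
  if depth n = depth u + r ∧ anc n (depth u) = (u.2 : ℕ) then
    (if anc n (depth u + 1) % 2 = 0 then 1 else -1) * ((Real.sqrt 2)⁻¹) ^ r
  else 0

end BTNode

/-- Index type for the Haar modes: either a scaling level `ℓ ∈ {0,…,L}` or a pair
`(u, r)` of an internal node `u` (depth `< L`) and a relative depth `1 ≤ r ≤ h(u)`. -/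
def HaarIdx (L : ℕ) :=
  Fin (L + 1) ⊕
    {p : BTNode L × ℕ // BTNode.depth p.1 < L ∧ 1 ≤ p.2 ∧ p.2 ≤ L - BTNode.depth p.1}

/-- The Haar mode family, viewed in the Euclidean space of real functions on the nodes. -/
noncomputable def haarMode (L : ℕ) : HaarIdx L → EuclideanSpace ℝ (BTNode L) :=
  fun i => match i with
    | Sum.inl ℓ => WithLp.toLp 2 (fun n => BTNode.scalingMode ℓ n)
    | Sum.inr p => WithLp.toLp 2 (fun n => BTNode.waveletMode p.1.1 p.1.2 n)

/-! ### Auxiliary counting lemmas over `Finset.range` -/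

open Finset

private lemma sum_range_mul' {M : Type*} [AddCommMonoid M] (f : ℕ → M) (m n : ℕ) :
    ∑ k ∈ range (m * n), f k = ∑ i ∈ range m, ∑ j ∈ range n, f (i * n + j) := by
  induction m with
  | zero => simp
  | succ m ih =>
      rw [Nat.succ_mul, Finset.sum_range_add, ih, Finset.sum_range_succ]

private lemma div_trick (k s a : ℕ) : k / 2 ^ (s + a) = (k / 2 ^ s) / 2 ^ a := by
  rw [pow_add, Nat.div_div_eq_div_mul]

private lemma sum_sign_key (N m : ℕ) :
    ∑ t ∈ range (N * 2), (if t / 2 = m then (if t % 2 = 0 then (1:ℝ) else -1) else 0) = 0 := by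
  rw [sum_range_mul']
  apply Finset.sum_eq_zero
  intro a _
  rw [Finset.sum_range_succ, Finset.sum_range_one]
  have h0 : (a * 2 + 0) / 2 = a := by omega
  have h1 : (a * 2 + 1) / 2 = a := by omega
  have h2 : (a * 2 + 0) % 2 = 0 := by omega
  have h3 : (a * 2 + 1) % 2 = 1 := by omega
  rw [h0, h1, h2, h3]
  by_cases hm : a = m <;> simp [hm]

private lemma sum_sign_zero (d e m : ℕ) (he : 1 ≤ e) (hed : e ≤ d) :
    ∑ k ∈ range (2 ^ d),
      (if k / 2 ^ e = m then (if (k / 2 ^ (e - 1)) % 2 = 0 then (1:ℝ) else -1) else 0) = 0 := by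
  have h2 : 2 ^ d = (2 ^ (d - e) * 2) * 2 ^ (e - 1) := by
    rw [mul_assoc, ← pow_succ', ← pow_add]
    congr 1
    omega
  rw [h2, sum_range_mul']
  have key : ∀ t j : ℕ, j < 2 ^ (e - 1) →
      (if (t * 2 ^ (e - 1) + j) / 2 ^ e = m then
        (if ((t * 2 ^ (e - 1) + j) / 2 ^ (e - 1)) % 2 = 0 then (1:ℝ) else -1) else 0)
      = (if t / 2 = m then (if t % 2 = 0 then (1:ℝ) else -1) else 0) := by
    intro t j hj
    have hpos : 0 < 2 ^ (e - 1) := Nat.pow_pos (by norm_num)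
    have hdiv1 : (t * 2 ^ (e - 1) + j) / 2 ^ (e - 1) = t := by
      rw [mul_comm, Nat.mul_add_div hpos, Nat.div_eq_of_lt hj, add_zero]
    have hdiv2 : (t * 2 ^ (e - 1) + j) / 2 ^ e = t / 2 := by
      have h : (2:ℕ) ^ e = 2 ^ (e - 1) * 2 := by
        rw [← pow_succ]; congr 1; omega
      rw [h, ← Nat.div_div_eq_div_mul, hdiv1]
    rw [hdiv1, hdiv2]
  calc ∑ t ∈ range (2 ^ (d - e) * 2), ∑ j ∈ range (2 ^ (e - 1)),
        (if (t * 2 ^ (e - 1) + j) / 2 ^ e = m then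
          (if ((t * 2 ^ (e - 1) + j) / 2 ^ (e - 1)) % 2 = 0 then (1:ℝ) else -1) else 0)
      = ∑ t ∈ range (2 ^ (d - e) * 2), ∑ _j ∈ range (2 ^ (e - 1)),
        (if t / 2 = m then (if t % 2 = 0 then (1:ℝ) else -1) else 0) := by
        apply Finset.sum_congr rfl; intro t _; apply Finset.sum_congr rfl; intro j hj
        exact key t j (Finset.mem_range.mp hj)
    _ = ∑ t ∈ range (2 ^ (d - e) * 2), (2 ^ (e - 1) : ℝ) *
        (if t / 2 = m then (if t % 2 = 0 then (1:ℝ) else -1) else 0) := by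
        simp [Finset.sum_const, mul_comm]
    _ = (2 ^ (e - 1) : ℝ) * ∑ t ∈ range (2 ^ (d - e) * 2),
        (if t / 2 = m then (if t % 2 = 0 then (1:ℝ) else -1) else 0) := by
        rw [Finset.mul_sum]
    _ = 0 := by rw [sum_sign_key]; ring

private lemma sum_indicator (d e m : ℕ) (hed : e ≤ d) (hm : m < 2 ^ (d - e)) (c : ℝ) :
    ∑ k ∈ range (2 ^ d), (if k / 2 ^ e = m then c else 0) = 2 ^ e * c := by
  have h2 : 2 ^ d = 2 ^ (d - e) * 2 ^ e := by rw [← pow_add]; congr 1; omega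
  rw [h2, sum_range_mul']
  have key : ∀ t j : ℕ, j < 2 ^ e → (t * 2 ^ e + j) / 2 ^ e = t := by
    intro t j hj
    rw [mul_comm, Nat.mul_add_div (Nat.pow_pos (by norm_num)),
      Nat.div_eq_of_lt hj, add_zero]
  calc ∑ t ∈ range (2 ^ (d - e)), ∑ j ∈ range (2 ^ e),
        (if (t * 2 ^ e + j) / 2 ^ e = m then c else 0)
      = ∑ t ∈ range (2 ^ (d - e)), ∑ _j ∈ range (2 ^ e), (if t = m then c else 0) := by
        apply Finset.sum_congr rfl; intro t _; apply Finset.sum_congr rfl; intro j hj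
        rw [key t j (Finset.mem_range.mp hj)]
    _ = ∑ t ∈ range (2 ^ (d - e)), (if t = m then (2 ^ e : ℝ) * c else 0) := by
        apply Finset.sum_congr rfl; intro t _
        split_ifs <;> simp
    _ = 2 ^ e * c := by rw [Finset.sum_ite_eq' _ _ _]; simp [Finset.mem_range.mpr hm]

/-! ### Layer reduction and inner products of modes -/

namespace BTNode

lemma sum_layer {L : ℕ} (d : Fin (L + 1)) (F : BTNode L → ℝ)
    (hF : ∀ n : BTNode L, depth n ≠ (d : ℕ) → F n = 0) :
    ∑ n : BTNode L, F n = ∑ k : Fin (2 ^ (d : ℕ)), F ⟨d, k⟩ := by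
  rw [← Finset.univ_sigma_univ, Finset.sum_sigma]
  apply Finset.sum_eq_single_of_mem d (Finset.mem_univ d)
  intro ℓ _ hℓ
  apply Finset.sum_eq_zero
  intro k _
  exact hF ⟨ℓ, k⟩ (fun h => hℓ (Fin.ext h))

lemma sum_layer' {L : ℕ} (d : Fin (L + 1)) (F : BTNode L → ℝ) (G : ℕ → ℝ)
    (hF : ∀ n : BTNode L, depth n ≠ (d : ℕ) → F n = 0)
    (hFG : ∀ (k : ℕ) (hk : k < 2 ^ (d : ℕ)), F ⟨d, ⟨k, hk⟩⟩ = G k) :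
    ∑ n : BTNode L, F n = ∑ k ∈ range (2 ^ (d : ℕ)), G k := by
  rw [sum_layer d F hF, ← Fin.sum_univ_eq_sum_range]
  exact Finset.sum_congr rfl fun k _ => hFG k.1 k.2

lemma sqrt_two_inv_pow_mul (a : ℕ) :
    ((Real.sqrt 2)⁻¹) ^ a * ((Real.sqrt 2)⁻¹) ^ a = (2⁻¹ : ℝ) ^ a := by
  rw [← mul_pow, ← mul_inv, Real.mul_self_sqrt (by norm_num)]

lemma scaling_eq_zero {L : ℕ} {ℓ : Fin (L + 1)} {n : BTNode L}
    (h : depth n ≠ (ℓ : ℕ)) : scalingMode ℓ n = 0 := if_neg h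

lemma wavelet_eq_zero {L : ℕ} {u : BTNode L} {r : ℕ} {n : BTNode L}
    (h : ¬(depth n = depth u + r ∧ anc n (depth u) = (u.2 : ℕ))) :
    waveletMode u r n = 0 := if_neg h

lemma wavelet_apply_pos {L : ℕ} {u : BTNode L} {r : ℕ} {n : BTNode L}
    (h1 : depth n = depth u + r) (h2 : anc n (depth u) = (u.2 : ℕ)) :
    waveletMode u r n =
      (if anc n (depth u + 1) % 2 = 0 then 1 else -1) * ((Real.sqrt 2)⁻¹) ^ r :=
  if_pos ⟨h1, h2⟩

lemma scaling_self {L : ℕ} (ℓ : Fin (L + 1)) :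
    ∑ n : BTNode L, scalingMode ℓ n * scalingMode ℓ n = 1 := by
  rw [sum_layer' ℓ _ (fun _ => (2⁻¹ : ℝ) ^ (ℓ : ℕ))
    (fun n h => by rw [scaling_eq_zero h, zero_mul])
    (fun k hk => by
      have hφ : scalingMode ℓ (⟨ℓ, ⟨k, hk⟩⟩ : BTNode L) = ((Real.sqrt 2)⁻¹) ^ (ℓ : ℕ) :=
        if_pos rfl
      rw [hφ]
      exact sqrt_two_inv_pow_mul _)]
  rw [Finset.sum_const, Finset.card_range, nsmul_eq_mul]
  push_cast
  rw [← mul_pow]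
  norm_num

lemma scaling_scaling {L : ℕ} (ℓ ℓ' : Fin (L + 1)) (h : ℓ ≠ ℓ') :
    ∑ n : BTNode L, scalingMode ℓ n * scalingMode ℓ' n = 0 := by
  apply Finset.sum_eq_zero
  intro n _
  rcases eq_or_ne (depth n) (ℓ : ℕ) with h1 | h1
  · rw [scaling_eq_zero (ℓ := ℓ') (by rw [h1]; exact fun hc => h (Fin.ext hc)), mul_zero]
  · rw [scaling_eq_zero h1, zero_mul]

lemma scaling_wavelet {L : ℕ} (ℓ : Fin (L + 1)) (u : BTNode L) (r : ℕ) (hr : 1 ≤ r) :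
    ∑ n : BTNode L, scalingMode ℓ n * waveletMode u r n = 0 := by
  by_cases hd : (ℓ : ℕ) = depth u + r
  · have hpoint : ∀ (k : ℕ) (hk : k < 2 ^ (ℓ : ℕ)),
        scalingMode ℓ (⟨ℓ, ⟨k, hk⟩⟩ : BTNode L) * waveletMode u r (⟨ℓ, ⟨k, hk⟩⟩ : BTNode L) =
        ((Real.sqrt 2)⁻¹) ^ (ℓ : ℕ) * ((Real.sqrt 2)⁻¹) ^ r *
          (if k / 2 ^ r = (u.2 : ℕ) then
            (if (k / 2 ^ (r - 1)) % 2 = 0 then (1:ℝ) else -1) else 0) := by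
      intro k hk'
      have ha : anc (⟨ℓ, ⟨k, hk'⟩⟩ : BTNode L) (depth u) = k / 2 ^ r := by
        show k / 2 ^ ((ℓ : ℕ) - depth u) = _
        rw [show (ℓ : ℕ) - depth u = r from by omega]
      have hb : anc (⟨ℓ, ⟨k, hk'⟩⟩ : BTNode L) (depth u + 1) = k / 2 ^ (r - 1) := by
        show k / 2 ^ ((ℓ : ℕ) - (depth u + 1)) = _
        rw [show (ℓ : ℕ) - (depth u + 1) = r - 1 from by omega]
      have hφ : scalingMode ℓ (⟨ℓ, ⟨k, hk'⟩⟩ : BTNode L) = ((Real.sqrt 2)⁻¹) ^ (ℓ : ℕ) :=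
        if_pos rfl
      by_cases hk : k / 2 ^ r = (u.2 : ℕ)
      · rw [hφ, wavelet_apply_pos
          (show depth (⟨ℓ, ⟨k, hk'⟩⟩ : BTNode L) = depth u + r from hd) (ha.trans hk),
          hb, if_pos hk]
        split_ifs <;> ring
      · rw [hφ, wavelet_eq_zero (fun hc => hk (ha.symm.trans hc.2)), if_neg hk,
          mul_zero, mul_zero]
    rw [sum_layer' ℓ _ _ (fun n h => by rw [scaling_eq_zero h, zero_mul]) hpoint,
      ← Finset.mul_sum, sum_sign_zero (ℓ : ℕ) r (u.2 : ℕ) hr (by omega), mul_zero]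
  · apply Finset.sum_eq_zero
    intro n _
    rcases eq_or_ne (depth n) (ℓ : ℕ) with h1 | h1
    · rw [wavelet_eq_zero (fun hc => hd (h1 ▸ hc.1)), mul_zero]
    · rw [scaling_eq_zero h1, zero_mul]

lemma wavelet_self {L : ℕ} (u : BTNode L) (r : ℕ) (hr : 1 ≤ r)
    (hL : depth u + r ≤ L) :
    ∑ n : BTNode L, waveletMode u r n * waveletMode u r n = 1 := by
  have hdL : depth u + r < L + 1 := by omega
  have hu2 : (u.2 : ℕ) < 2 ^ (depth u) := u.2.isLt
  have hpoint : ∀ (k : ℕ) (hk : k < 2 ^ (depth u + r)),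
      waveletMode u r (⟨⟨depth u + r, hdL⟩, ⟨k, hk⟩⟩ : BTNode L) *
        waveletMode u r (⟨⟨depth u + r, hdL⟩, ⟨k, hk⟩⟩ : BTNode L) =
      (if k / 2 ^ r = (u.2 : ℕ) then ((2:ℝ)⁻¹) ^ r else 0) := by
    intro k hk'
    have ha : anc (⟨⟨depth u + r, hdL⟩, ⟨k, hk'⟩⟩ : BTNode L) (depth u) = k / 2 ^ r := by
      show k / 2 ^ (depth u + r - depth u) = _
      rw [show depth u + r - depth u = r from by omega]
    by_cases hk : k / 2 ^ r = (u.2 : ℕ)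
    · rw [wavelet_apply_pos rfl (ha.trans hk), if_pos hk]
      split_ifs <;> linear_combination sqrt_two_inv_pow_mul r
    · rw [wavelet_eq_zero (fun hc => hk (ha.symm.trans hc.2)), if_neg hk, mul_zero]
  rw [sum_layer' (⟨depth u + r, hdL⟩ : Fin (L + 1)) _ _
    (fun n h => by rw [wavelet_eq_zero (fun hc => h hc.1), zero_mul]) hpoint,
    sum_indicator (depth u + r) r (u.2 : ℕ) (by omega) (by simpa using hu2),
    ← mul_pow]
  norm_num

lemma wavelet_samedepth {L : ℕ} (u v : BTNode L) (r s : ℕ)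
    (hdu : depth u = depth v) (hne : (u.2 : ℕ) ≠ (v.2 : ℕ)) :
    ∑ n : BTNode L, waveletMode u r n * waveletMode v s n = 0 := by
  apply Finset.sum_eq_zero
  intro n _
  rcases eq_or_ne (anc n (depth u)) (u.2 : ℕ) with h | h
  · rw [wavelet_eq_zero (u := v) (fun hc => hne (by rw [← h, hdu, hc.2])), mul_zero]
  · rw [wavelet_eq_zero (fun hc => h hc.2), zero_mul]

lemma wavelet_difflayer {L : ℕ} (u v : BTNode L) (r s : ℕ)
    (h : depth u + r ≠ depth v + s) :
    ∑ n : BTNode L, waveletMode u r n * waveletMode v s n = 0 := by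
  apply Finset.sum_eq_zero
  intro n _
  rcases eq_or_ne (depth n) (depth u + r) with h1 | h1
  · rw [wavelet_eq_zero (u := v) (fun hc => h (by rw [← h1, hc.1])), mul_zero]
  · rw [wavelet_eq_zero (fun hc => h1 hc.1), zero_mul]

lemma wavelet_cross {L : ℕ} (u v : BTNode L) (r s : ℕ) (hs : 1 ≤ s)
    (hlt : depth u < depth v) (hd : depth u + r = depth v + s)
    (hL : depth u + r ≤ L) :
    ∑ n : BTNode L, waveletMode u r n * waveletMode v s n = 0 := by
  have hdL : depth u + r < L + 1 := by omega
  by_cases hB : (v.2 : ℕ) / 2 ^ (depth v - depth u) = (u.2 : ℕ)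
  · have hpoint : ∀ (k : ℕ) (hk : k < 2 ^ (depth u + r)),
        waveletMode u r (⟨⟨depth u + r, hdL⟩, ⟨k, hk⟩⟩ : BTNode L) *
          waveletMode v s (⟨⟨depth u + r, hdL⟩, ⟨k, hk⟩⟩ : BTNode L) =
        ((if ((v.2 : ℕ) / 2 ^ (depth v - (depth u + 1))) % 2 = 0 then (1:ℝ) else -1) *
            ((Real.sqrt 2)⁻¹) ^ r * ((Real.sqrt 2)⁻¹) ^ s) *
          (if k / 2 ^ s = (v.2 : ℕ) then
            (if (k / 2 ^ (s - 1)) % 2 = 0 then (1:ℝ) else -1) else 0) := by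
      intro k hk'
      have hav : anc (⟨⟨depth u + r, hdL⟩, ⟨k, hk'⟩⟩ : BTNode L) (depth v) = k / 2 ^ s := by
        show k / 2 ^ (depth u + r - depth v) = _
        rw [show depth u + r - depth v = s from by omega]
      by_cases hk : k / 2 ^ s = (v.2 : ℕ)
      · have hku : anc (⟨⟨depth u + r, hdL⟩, ⟨k, hk'⟩⟩ : BTNode L) (depth u) = (u.2 : ℕ) := by
          show k / 2 ^ (depth u + r - depth u) = _
          rw [show depth u + r - depth u = s + (depth v - depth u) from by omega,
            div_trick, hk, hB]
        have hsu : anc (⟨⟨depth u + r, hdL⟩, ⟨k, hk'⟩⟩ : BTNode L) (depth u + 1) =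
            (v.2 : ℕ) / 2 ^ (depth v - (depth u + 1)) := by
          show k / 2 ^ (depth u + r - (depth u + 1)) = _
          rw [show depth u + r - (depth u + 1) = s + (depth v - (depth u + 1)) from by omega,
            div_trick, hk]
        have hsv : anc (⟨⟨depth u + r, hdL⟩, ⟨k, hk'⟩⟩ : BTNode L) (depth v + 1) =
            k / 2 ^ (s - 1) := by
          show k / 2 ^ (depth u + r - (depth v + 1)) = _
          rw [show depth u + r - (depth v + 1) = s - 1 from by omega]
        rw [wavelet_apply_pos rfl hku,
          wavelet_apply_pos
            (show depth (⟨⟨depth u + r, hdL⟩, ⟨k, hk'⟩⟩ : BTNode L) = depth v + s from hd)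
            (hav.trans hk),
          hsu, hsv, if_pos hk]
        split_ifs <;> ring
      · rw [wavelet_eq_zero (u := v) (fun hc => hk (hav.symm.trans hc.2)), if_neg hk,
          mul_zero, mul_zero]
    rw [sum_layer' (⟨depth u + r, hdL⟩ : Fin (L + 1)) _ _
      (fun n h => by rw [wavelet_eq_zero (fun hc => h hc.1), zero_mul]) hpoint,
      ← Finset.mul_sum, sum_sign_zero (depth u + r) s (v.2 : ℕ) hs (by omega), mul_zero]
  · apply Finset.sum_eq_zero
    intro n _
    by_cases h2 : depth n = depth v + s ∧ anc n (depth v) = (v.2 : ℕ)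
    · have key : anc n (depth u) = (v.2 : ℕ) / 2 ^ (depth v - depth u) := by
        have h3 : depth n - depth u = (depth n - depth v) + (depth v - depth u) := by omega
        unfold anc
        rw [h3, div_trick]
        congr 1
        exact h2.2
      rw [wavelet_eq_zero (u := u) (fun hc => hB (by rw [← key, hc.2])), zero_mul]
    · rw [wavelet_eq_zero h2, mul_zero]

end BTNode

/-! ### Counting -/

private lemma myGeomSumTwo (n : ℕ) : ∑ ℓ ∈ range n, 2 ^ ℓ + 1 = 2 ^ n := by
  induction n with
  | zero => simp
  | succ n ih => rw [Finset.sum_range_succ]; omega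

private lemma weighted_sum_two (n : ℕ) :
    ∑ ℓ ∈ range (n + 1), 2 ^ ℓ * (n - ℓ) + (n + 2) = 2 ^ (n + 1) := by
  induction n with
  | zero => simp
  | succ n ih =>
      have hsplit : ∑ ℓ ∈ range (n + 1 + 1), 2 ^ ℓ * (n + 1 - ℓ)
          = (∑ ℓ ∈ range (n + 1), 2 ^ ℓ * (n - ℓ)) + ∑ ℓ ∈ range (n + 1), 2 ^ ℓ := by
        rw [Finset.sum_range_succ, Nat.sub_self, Nat.mul_zero, Nat.add_zero,
          ← Finset.sum_add_distrib]
        apply Finset.sum_congr rfl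
        intro ℓ hℓ
        have : n + 1 - ℓ = (n - ℓ) + 1 := by
          have := Finset.mem_range.mp hℓ; omega
        rw [this, Nat.mul_add, Nat.mul_one]
      have hg := myGeomSumTwo (n + 1)
      have hp : (2:ℕ) ^ (n + 1 + 1) = 2 ^ (n + 1) + 2 ^ (n + 1) := by ring
      omega

def haarEquiv (L : ℕ) :
    HaarIdx L ≃ (Fin (L + 1) ⊕ Σ u : BTNode L, Fin (L - BTNode.depth u)) where
  toFun i :=
    match i with
    | Sum.inl ℓ => Sum.inl ℓ
    | Sum.inr p => Sum.inr ⟨p.1.1, ⟨p.1.2 - 1, by have := p.2; omega⟩⟩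
  invFun i :=
    match i with
    | Sum.inl ℓ => Sum.inl ℓ
    | Sum.inr q => Sum.inr ⟨(q.1, (q.2 : ℕ) + 1), by
        have h := q.2.isLt
        show BTNode.depth q.1 < L ∧ 1 ≤ (q.2 : ℕ) + 1 ∧ (q.2 : ℕ) + 1 ≤ L - BTNode.depth q.1
        omega⟩
  left_inv i := by
    match i with
    | Sum.inl ℓ => rfl
    | Sum.inr p =>
        apply congrArg Sum.inr
        apply Subtype.ext
        show (p.1.1, p.1.2 - 1 + 1) = p.1
        have h1 : p.1.2 - 1 + 1 = p.1.2 := by have := p.2; omega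
        rw [h1]
  right_inv i := by
    match i with
    | Sum.inl ℓ => rfl
    | Sum.inr q =>
        apply congrArg Sum.inr
        apply congrArg (Sigma.mk q.1)
        apply Fin.ext
        show (q.2 : ℕ) + 1 - 1 = (q.2 : ℕ)
        omega

lemma haarIdx_card (L : ℕ) :
    @Fintype.card (HaarIdx L) (Fintype.ofEquiv _ (haarEquiv L).symm)
      = Fintype.card (BTNode L) := by
  rw [@Fintype.card_congr _ _ (Fintype.ofEquiv _ (haarEquiv L).symm) _ (haarEquiv L)]
  have hS : ∑ u : BTNode L, (L - BTNode.depth u)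
      = ∑ ℓ ∈ range (L + 1), 2 ^ ℓ * (L - ℓ) := by
    rw [← Finset.univ_sigma_univ, Finset.sum_sigma,
      ← Fin.sum_univ_eq_sum_range (fun ℓ => 2 ^ ℓ * (L - ℓ)) (L + 1)]
    apply Finset.sum_congr rfl
    intro ℓ _
    have : ∀ k : Fin (2 ^ (ℓ : ℕ)),
        (L - BTNode.depth (⟨ℓ, k⟩ : BTNode L)) = L - (ℓ : ℕ) := fun _ => rfl
    rw [Finset.sum_congr rfl (fun k _ => this k), Finset.sum_const, Finset.card_univ,
      Fintype.card_fin, smul_eq_mul]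
  have hB : Fintype.card (BTNode L) = ∑ ℓ ∈ range (L + 1), 2 ^ ℓ := by
    rw [Fintype.card_sigma, ← Fin.sum_univ_eq_sum_range (fun ℓ => 2 ^ ℓ) (L + 1)]
    apply Finset.sum_congr rfl
    intro ℓ _
    rw [Fintype.card_fin]
  rw [Fintype.card_sum, Fintype.card_fin, Fintype.card_sigma]
  have : ∀ u : BTNode L, Fintype.card (Fin (L - BTNode.depth u)) = L - BTNode.depth u :=
    fun u => Fintype.card_fin _
  rw [Finset.sum_congr rfl (fun u _ => this u), hS, hB]
  have h1 := weighted_sum_two L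
  have h2 := myGeomSumTwo (L + 1)
  omega


/-- the scaling modes together with the wavelet modes form an orthonormal
basis of the space of real-valued functions on the nodes of the full binary tree of
depth `L`: they are orthonormal and they span the whole space. -/
theorem haar_modes_orthonormal_basis (L : ℕ) :
    Orthonormal ℝ (haarMode L) ∧
    Submodule.span ℝ (Set.range (haarMode L)) = ⊤ := by
  classical
  have hinner : ∀ f g : EuclideanSpace ℝ (BTNode L),
      (inner ℝ f g : ℝ) = ∑ n : BTNode L, f n * g n := by
    intro f g
    rw [PiLp.inner_apply]
    apply Finset.sum_congr rfl
    intro n _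
    simp [RCLike.inner_apply, mul_comm]
  have horth : Orthonormal ℝ (haarMode L) := by
    rw [orthonormal_iff_ite]
    intro i j
    match i, j with
    | Sum.inl ℓ, Sum.inl ℓ' =>
        by_cases h : ℓ = ℓ'
        · subst h
          simp only [if_pos rfl, hinner, haarMode]
          exact (BTNode.scaling_self ℓ).trans (if_pos rfl).symm
        · erw [if_neg (fun hc => h (Sum.inl.inj hc)), hinner]
          exact BTNode.scaling_scaling ℓ ℓ' h
    | Sum.inl ℓ, Sum.inr p =>
        erw [if_neg Sum.inl_ne_inr, hinner]
        exact BTNode.scaling_wavelet ℓ p.1.1 p.1.2 p.2.2.1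
    | Sum.inr p, Sum.inl ℓ =>
        erw [if_neg Sum.inr_ne_inl, real_inner_comm, hinner]
        exact BTNode.scaling_wavelet ℓ p.1.1 p.1.2 p.2.2.1
    | Sum.inr p, Sum.inr q =>
        obtain ⟨⟨u, r⟩, hp⟩ := p
        obtain ⟨⟨v, s⟩, hq⟩ := q
        have hp' : BTNode.depth u < L ∧ 1 ≤ r ∧ r ≤ L - BTNode.depth u := hp
        have hq' : BTNode.depth v < L ∧ 1 ≤ s ∧ s ≤ L - BTNode.depth v := hq
        rw [hinner]
        show (∑ n : BTNode L, BTNode.waveletMode u r n * BTNode.waveletMode v s n) = _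
        by_cases hpq : (Sum.inr ⟨(u, r), hp⟩ : HaarIdx L) = Sum.inr ⟨(v, s), hq⟩
        · erw [if_pos hpq]
          have huv : u = v ∧ r = s := by
            have := Sum.inr.inj hpq
            have h2 := congrArg Subtype.val this
            exact ⟨congrArg Prod.fst h2, congrArg Prod.snd h2⟩
          obtain ⟨rfl, rfl⟩ := huv
          exact BTNode.wavelet_self u r hp'.2.1 (by have := hp'.1; have := hp'.2.2; omega)
        · erw [if_neg hpq]
          by_cases hlayer : BTNode.depth u + r = BTNode.depth v + s
          · by_cases hdepth : BTNode.depth u = BTNode.depth v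
            · have hne : (u.2 : ℕ) ≠ (v.2 : ℕ) := by
                intro hval
                apply hpq
                have huv : u = v := by
                  apply Sigma.ext (Fin.ext hdepth)
                  exact (Fin.heq_ext_iff (congrArg (fun x => 2 ^ x) hdepth)).mpr hval
                subst huv
                have hrs : r = s := by omega
                subst hrs
                rfl
              exact BTNode.wavelet_samedepth u v r s hdepth hne
            · rcases Nat.lt_or_ge (BTNode.depth u) (BTNode.depth v) with hlt | hge
              · exact BTNode.wavelet_cross u v r s hq'.2.1 hlt hlayer
                  (by have := hp'.1; have := hp'.2.2; omega)
              · have hlt : BTNode.depth v < BTNode.depth u := by omega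
                rw [Finset.sum_congr rfl
                  (fun n _ => mul_comm (BTNode.waveletMode u r n) (BTNode.waveletMode v s n))]
                exact BTNode.wavelet_cross v u s r hp'.2.1 hlt hlayer.symm
                  (by have := hq'.1; have := hq'.2.2; omega)
          · exact BTNode.wavelet_difflayer u v r s hlayer
  refine ⟨horth, ?_⟩
  letI : Fintype (HaarIdx L) := Fintype.ofEquiv _ (haarEquiv L).symm
  haveI : Nonempty (HaarIdx L) := ⟨Sum.inl 0⟩
  apply horth.linearIndependent.span_eq_top_of_card_eq_finrank
  rw [finrank_euclideanSpace]
  exact haarIdx_card L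
end

section
/- Let M_{ij} = f(dist(i,j)) on the full binary tree of depth L, and fix an internal node u. If x is any function supported on the subtree T(u), antisymmetric under swapping the two child subtrees of u, and constant on each relative-depth layer within each child subtree, then Mx vanishes identically outside T(u). -/
namespace BTNode

variable {L : ℕ}

lemma fg_congr {P Q : ℕ → Prop} [DecidablePred P] [DecidablePred Q] :
    ∀ b, (∀ a, a ≤ b → (P a ↔ Q a)) → Nat.findGreatest P b = Nat.findGreatest Q b
  | 0, _ => rfl
  | (b+1), h => by
      rw [Nat.findGreatest_succ, Nat.findGreatest_succ,
        fg_congr b (fun a ha => h a (Nat.le_succ_of_le ha))]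
      by_cases hp : P (b+1)
      · rw [if_pos hp, if_pos ((h _ le_rfl).1 hp)]
      · rw [if_neg hp, if_neg (fun hq => hp ((h _ le_rfl).2 hq))]

lemma testBit_div_pow (n i j : ℕ) : (n / 2^i).testBit j = n.testBit (i+j) := by
  rw [← Nat.shiftRight_eq_div_pow, Nat.testBit_shiftRight]

lemma xor_div_eq {k p q : ℕ} (h : p < q) : (k ^^^ 2^p) / 2^q = k / 2^q := by
  apply Nat.eq_of_testBit_eq
  intro i
  rw [testBit_div_pow, testBit_div_pow, Nat.testBit_xor, Nat.testBit_two_pow]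
  have : p ≠ q + i := by omega
  simp [this]

lemma xor_div_ne {k p : ℕ} : (k ^^^ 2^p) / 2^p ≠ k / 2^p := by
  intro h
  have := congrArg (fun m => m.testBit 0) h
  simp only [testBit_div_pow, Nat.testBit_xor, Nat.testBit_two_pow, Nat.add_zero] at this
  simp at this

lemma anc_anc (n : BTNode L) {a b : ℕ} (hb : b ≤ a) (ha : a ≤ depth n) :
    anc n b = anc n a / 2 ^ (a - b) := by
  unfold anc
  rw [Nat.div_div_eq_div_mul, ← pow_add]
  congr 2
  omega

lemma btnode_ext {m n : BTNode L} (h1 : depth m = depth n) (h2 : (m.2 : ℕ) = (n.2 : ℕ)) :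
    m = n := by
  obtain ⟨⟨a, ha⟩, ⟨k, hk⟩⟩ := m
  obtain ⟨⟨b, hb⟩, ⟨l, hl⟩⟩ := n
  simp only [depth, Fin.val_mk] at h1 h2
  subst h1; subst h2; rfl

def swp (u : BTNode L) (j : BTNode L) : BTNode L :=
  if h : depth u < depth j ∧ anc j (depth u) = (u.2 : ℕ) then
    ⟨j.1, ⟨(j.2 : ℕ) ^^^ 2 ^ (depth j - depth u - 1),
      Nat.xor_lt_two_pow j.2.isLt
        (Nat.pow_lt_pow_right one_lt_two
          (by have h1 := h.1; simp only [depth] at h1 ⊢; omega))⟩⟩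
  else j

lemma swp_val (u j : BTNode L) (h : depth u < depth j ∧ anc j (depth u) = (u.2 : ℕ)) :
    ((swp u j).2 : ℕ) = (j.2 : ℕ) ^^^ 2 ^ (depth j - depth u - 1) := by
  unfold swp
  rw [dif_pos h]

lemma swp_depth (u j : BTNode L) : depth (swp u j) = depth j := by
  unfold swp
  split <;> rfl

lemma swp_anc_le (u j : BTNode L) (h : depth u < depth j ∧ anc j (depth u) = (u.2 : ℕ))
    {a : ℕ} (ha : a ≤ depth u) : anc (swp u j) a = anc j a := by
  unfold swp
  rw [dif_pos h]
  show ((j.2 : ℕ) ^^^ 2 ^ (depth j - depth u - 1)) / 2 ^ (depth j - a)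
      = (j.2 : ℕ) / 2 ^ (depth j - a)
  exact xor_div_eq (by omega)

lemma swp_anc_ne (u j : BTNode L) (h : depth u < depth j ∧ anc j (depth u) = (u.2 : ℕ)) :
    anc (swp u j) (depth u + 1) ≠ anc j (depth u + 1) := by
  unfold swp
  rw [dif_pos h]
  show ((j.2 : ℕ) ^^^ 2 ^ (depth j - depth u - 1)) / 2 ^ (depth j - (depth u + 1))
      ≠ (j.2 : ℕ) / 2 ^ (depth j - (depth u + 1))
  have : depth j - (depth u + 1) = depth j - depth u - 1 := by omega
  rw [this]
  exact xor_div_ne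

lemma swp_cond (u j : BTNode L) (h : depth u < depth j ∧ anc j (depth u) = (u.2 : ℕ)) :
    depth u < depth (swp u j) ∧ anc (swp u j) (depth u) = (u.2 : ℕ) := by
  refine ⟨by rw [swp_depth]; exact h.1, ?_⟩
  rw [swp_anc_le u j h le_rfl]; exact h.2

lemma swp_swp (u j : BTNode L) : swp u (swp u j) = j := by
  by_cases h : depth u < depth j ∧ anc j (depth u) = (u.2 : ℕ)
  · have h2 := swp_cond u j h
    apply btnode_ext
    · rw [swp_depth, swp_depth]
    · rw [swp_val _ _ h2, swp_val _ _ h, swp_depth,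
        Nat.xor_assoc, Nat.xor_self, Nat.xor_zero]
  · unfold swp
    rw [dif_neg h, dif_neg h]

end BTNode

variable {L : ℕ}

lemma lca_swp (u i j : BTNode L) (hi : ¬ BTNode.InSubtree u i)
    (h : BTNode.depth u < BTNode.depth j ∧ BTNode.anc j (BTNode.depth u) = (u.2 : ℕ)) :
    BTNode.lcaDepth i (BTNode.swp u j) = BTNode.lcaDepth i j := by
  unfold BTNode.lcaDepth
  rw [BTNode.swp_depth]
  apply BTNode.fg_congr
  intro a ha
  by_cases hle : a ≤ BTNode.depth u
  · rw [BTNode.swp_anc_le u j h hle]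
  · have key : ∀ m : BTNode L,
        BTNode.depth u < BTNode.depth m ∧ BTNode.anc m (BTNode.depth u) = (u.2 : ℕ) →
        BTNode.depth m = BTNode.depth j → BTNode.anc i a ≠ BTNode.anc m a := by
      intro m hm hdm haeq
      apply hi
      have hai : a ≤ BTNode.depth i := le_trans ha (min_le_left _ _)
      have haj : a ≤ BTNode.depth m := by rw [hdm]; exact le_trans ha (min_le_right _ _)
      refine ⟨by omega, ?_⟩
      have h1 := BTNode.anc_anc i (show BTNode.depth u ≤ a by omega) hai
      have h2 := BTNode.anc_anc m (show BTNode.depth u ≤ a by omega) haj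
      rw [h1, haeq, ← h2, hm.2]
    constructor
    · intro he; exact absurd he (key (BTNode.swp u j) (BTNode.swp_cond u j h) (BTNode.swp_depth u j))
    · intro he; exact absurd he (key j h rfl)

lemma dist_swp (u i j : BTNode L) (hi : ¬ BTNode.InSubtree u i)
    (h : BTNode.depth u < BTNode.depth j ∧ BTNode.anc j (BTNode.depth u) = (u.2 : ℕ)) :
    BTNode.dist i (BTNode.swp u j) = BTNode.dist i j := by
  unfold BTNode.dist
  rw [BTNode.swp_depth, lca_swp u i j hi h]



/-- let `M_{ij} = f(dist(i,j))` on the full binary tree of depth `L`, and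
fix an internal node `u`.  If `x` is supported on the subtree `T(u)`, vanishes at `u`
itself, is constant on each relative-depth layer within each child subtree of `u`, and is
antisymmetric under swapping the two child subtrees (opposite values on the two sides of
the split at `u`, at equal depths), then `Mx` vanishes identically outside `T(u)`.
Here `anc n (depth u + 1)` identifies the child of `u` whose subtree contains `n`. -/
theorem distance_kernel_annihilates_split_vectors_outside_subtree
    (L : ℕ) (f : ℕ → ℝ) (u : BTNode L) (hu : BTNode.depth u < L)
    (x : BTNode L → ℝ)
    (hsupp : ∀ n : BTNode L, ¬ BTNode.InSubtree u n → x n = 0)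
    (hroot : x u = 0)
    (hconst : ∀ n n' : BTNode L,
      BTNode.InSubtree u n → BTNode.InSubtree u n' →
      BTNode.depth u < BTNode.depth n → BTNode.depth n = BTNode.depth n' →
      BTNode.anc n (BTNode.depth u + 1) = BTNode.anc n' (BTNode.depth u + 1) →
      x n = x n')
    (hanti : ∀ n n' : BTNode L,
      BTNode.InSubtree u n → BTNode.InSubtree u n' →
      BTNode.depth u < BTNode.depth n → BTNode.depth n = BTNode.depth n' →
      BTNode.anc n (BTNode.depth u + 1) ≠ BTNode.anc n' (BTNode.depth u + 1) →
      x n = -x n') :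
    ∀ i : BTNode L, ¬ BTNode.InSubtree u i →
      ∑ j : BTNode L, f (BTNode.dist i j) * x j = 0 := by

  intro i hi
  classical
  have hzero : ∀ j : BTNode L,
      ¬ (BTNode.depth u < BTNode.depth j ∧ BTNode.anc j (BTNode.depth u) = (u.2 : ℕ)) →
      x j = 0 := by
    intro j h
    by_cases hins : BTNode.InSubtree u j
    · have h2 := hins.2
      have hdd : BTNode.depth j = BTNode.depth u := by
        have h1 := hins.1
        have : ¬ (BTNode.depth u < BTNode.depth j) := fun hlt => h ⟨hlt, h2⟩
        omega
      have hval : (j.2 : ℕ) = (u.2 : ℕ) := by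
        unfold BTNode.anc at h2
        rw [hdd] at h2
        simpa using h2
      rw [show j = u from BTNode.btnode_ext hdd hval]
      exact hroot
    · exact hsupp j hins
  refine Finset.sum_involution (fun j _ => BTNode.swp u j) ?_ ?_
    (fun _ _ => Finset.mem_univ _) (fun j _ => BTNode.swp_swp u j)
  · intro j _
    show f (BTNode.dist i j) * x j + f (BTNode.dist i (BTNode.swp u j)) * x (BTNode.swp u j) = 0
    by_cases h : BTNode.depth u < BTNode.depth j ∧ BTNode.anc j (BTNode.depth u) = (u.2 : ℕ)
    · have hc := BTNode.swp_cond u j h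
      have hx : x (BTNode.swp u j) = - x j :=
        hanti (BTNode.swp u j) j ⟨le_of_lt hc.1, hc.2⟩ ⟨le_of_lt h.1, h.2⟩ hc.1
          (BTNode.swp_depth u j) (BTNode.swp_anc_ne u j h)
      rw [dist_swp u i j hi h, hx]
      ring
    · have hfix : BTNode.swp u j = j := by unfold BTNode.swp; rw [dif_neg h]
      rw [hfix, hzero j h]
      ring
  · intro j _ hne
    by_cases h : BTNode.depth u < BTNode.depth j ∧ BTNode.anc j (BTNode.depth u) = (u.2 : ℕ)
    · intro heq
      exact BTNode.swp_anc_ne u j h (by rw [show BTNode.swp u j = j from heq])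
    · exact absurd (by rw [hzero j h]; ring) hne
end

section
/- Let M_{ij} = f(dist(i,j)) on the full binary tree of depth L. Then every split space S^u (the span of the wavelet modes ψ_{u,1},...,ψ_{u,h(u)} rooted at an internal node u) is invariant under M: M S^u ⊆ S^u. -/
/-- The split space `S^u`: the span of the wavelet modes `ψ_{u,r}`, `r = 1,…,h(u)`. -/
noncomputable def splitSpace (L : ℕ) (u : BTNode L) : Submodule ℝ (BTNode L → ℝ) :=
  Submodule.span ℝ
    {v : BTNode L → ℝ |
      ∃ r : ℕ, 1 ≤ r ∧ r ≤ L - BTNode.depth u ∧ v = BTNode.waveletMode u r}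



open Finset

namespace SplitAux

lemma fg_congr {P Q : ℕ → Prop} [DecidablePred P] [DecidablePred Q]
    (N : ℕ) (h : ∀ a ≤ N, (P a ↔ Q a)) :
    Nat.findGreatest P N = Nat.findGreatest Q N := by
  induction N with
  | zero => rfl
  | succ n ih =>
    rw [Nat.findGreatest_succ, Nat.findGreatest_succ]
    by_cases hp : P (n + 1)
    · rw [if_pos hp, if_pos ((h _ le_rfl).1 hp)]
    · rw [if_neg hp, if_neg (fun hq => hp ((h _ le_rfl).2 hq))]
      exact ih fun a ha => h a (le_trans ha n.le_succ)

lemma fg_shift {P Q : ℕ → Prop} [DecidablePred P] [DecidablePred Q]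
    (d N : ℕ) (hP : P d) (hPQ : ∀ b, 1 ≤ b → b ≤ N → (P (d + b) ↔ Q b)) :
    Nat.findGreatest P (d + N) = d + Nat.findGreatest Q N := by
  induction N with
  | zero => simpa using Nat.findGreatest_eq hP
  | succ n ih =>
    have h1 : P (d + (n + 1)) ↔ Q (n + 1) := hPQ _ (by omega) le_rfl
    have h2 : d + (n + 1) = (d + n) + 1 := by omega
    rw [h2, Nat.findGreatest_succ, Nat.findGreatest_succ]
    by_cases hq : Q (n + 1)
    · rw [if_pos (show P (d + n + 1) from h1.2 hq), if_pos hq]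
      omega
    · rw [if_neg (show ¬P (d + n + 1) from fun hp => hq (h1.1 hp)), if_neg hq]
      exact ih fun b hb hb' => hPQ b hb (le_trans hb' n.le_succ)

lemma div_pow_add {x s p b : ℕ} (hb : b ≤ p) :
    (x * 2 ^ p + s) / 2 ^ (p - b) = x * 2 ^ b + s / 2 ^ (p - b) := by
  have h : x * 2 ^ p = (x * 2 ^ b) * 2 ^ (p - b) := by
    rw [mul_assoc, ← pow_add]
    congr 2
    omega
  rw [h, add_comm, Nat.add_mul_div_right _ _ (Nat.two_pow_pos _), add_comm]

lemma div_pow_div {s p a b : ℕ} (hab : a ≤ b) (hbp : b ≤ p) :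
    s / 2 ^ (p - b) / 2 ^ (b - a) = s / 2 ^ (p - a) := by
  rw [Nat.div_div_eq_div_mul, ← pow_add]
  congr 2
  omega

/-- depth (below the LCA of two subtree-relative indices) agreement function. -/
def Bfun (p r s t : ℕ) : ℕ :=
  Nat.findGreatest (fun b => s / 2 ^ (p - b) = t / 2 ^ (r - b)) (min p r)

lemma Bfun_le (p r s t : ℕ) : Bfun p r s t ≤ min p r := Nat.findGreatest_le _

lemma Bfun_eq_zero {p r s t : ℕ} (h : s / 2 ^ (p - 1) ≠ t / 2 ^ (r - 1)) :
    Bfun p r s t = 0 := by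
  apply Nat.findGreatest_eq_zero_iff.2
  intro b hb hb' hP
  apply h
  have hbp : b ≤ p := le_trans hb' (min_le_left _ _)
  have hbr : b ≤ r := le_trans hb' (min_le_right _ _)
  calc s / 2 ^ (p - 1) = s / 2 ^ (p - b) / 2 ^ (b - 1) := (div_pow_div hb hbp).symm
    _ = t / 2 ^ (r - b) / 2 ^ (b - 1) := by rw [hP]
    _ = t / 2 ^ (r - 1) := div_pow_div hb hbr

lemma Bfun_succ {p r s t : ℕ} (hp : 1 ≤ p) (hr : 1 ≤ r)
    (h : s / 2 ^ (p - 1) = t / 2 ^ (r - 1)) :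
    Bfun p r s t = 1 + Bfun (p - 1) (r - 1) (s % 2 ^ (p - 1)) (t % 2 ^ (r - 1)) := by
  unfold Bfun
  have hmin : min p r = 1 + min (p - 1) (r - 1) := by omega
  rw [hmin]
  apply fg_shift
  · simpa using h
  · intro b hb hbN
    have hbp : b ≤ p - 1 := le_trans hbN (min_le_left _ _)
    have hbr : b ≤ r - 1 := le_trans hbN (min_le_right _ _)
    have hs := Nat.div_add_mod s (2 ^ (p - 1))
    have ht := Nat.div_add_mod t (2 ^ (r - 1))
    have h1 : s / 2 ^ (p - (1 + b)) =
        (s / 2 ^ (p - 1)) * 2 ^ b + (s % 2 ^ (p - 1)) / 2 ^ ((p - 1) - b) := by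
      conv_lhs => rw [← hs]
      rw [mul_comm (2 ^ (p - 1))]
      have : p - (1 + b) = (p - 1) - b := by omega
      rw [this]
      exact div_pow_add hbp
    have h2 : t / 2 ^ (r - (1 + b)) =
        (t / 2 ^ (r - 1)) * 2 ^ b + (t % 2 ^ (r - 1)) / 2 ^ ((r - 1) - b) := by
      conv_lhs => rw [← ht]
      rw [mul_comm (2 ^ (r - 1))]
      have : r - (1 + b) = (r - 1) - b := by omega
      rw [this]
      exact div_pow_add hbr
    rw [h1, h2, h]
    exact add_right_inj _

lemma Bfun_r_zero (p s t : ℕ) : Bfun p 0 s t = 0 := by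
  unfold Bfun
  simp

lemma Bfun_p_zero (r s t : ℕ) : Bfun 0 r s t = 0 := by
  unfold Bfun
  simp

end SplitAux

open Finset

namespace SplitAux

/-- Sum of `f (C - 2·B(s,t))` over a full level `t < 2^r`. -/
noncomputable def Usum (f : ℕ → ℝ) (p r s C : ℕ) : ℝ :=
  ∑ t ∈ Finset.range (2 ^ r), f (C - 2 * Bfun p r s t)

lemma Usum_succ (f : ℕ → ℝ) {p r s C : ℕ} (hs : s < 2 ^ (p + 1)) :
    Usum f (p + 1) (r + 1) s C = 2 ^ r * f C + Usum f p r (s % 2 ^ p) (C - 2) := by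
  have hsp : s / 2 ^ p ≤ 1 := by
    have := Nat.div_lt_iff_lt_mul (Nat.two_pow_pos p) |>.2
      (show s < 2 * 2 ^ p by rw [← pow_succ']; exact hs)
    omega
  have hsplit : (2 : ℕ) ^ (r + 1) = 2 ^ r + 2 ^ r := by rw [pow_succ]; omega
  unfold Usum
  rw [hsplit, Finset.sum_range_add]
  have hlow : ∀ t ∈ Finset.range (2 ^ r),
      t / 2 ^ ((r + 1) - 1) = 0 := fun t ht => by
    simp only [Finset.mem_range] at ht
    exact Nat.div_eq_of_lt (by simpa using ht)
  have hhigh : ∀ t ∈ Finset.range (2 ^ r),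
      (2 ^ r + t) / 2 ^ ((r + 1) - 1) = 1 := fun t ht => by
    simp only [Finset.mem_range] at ht
    rw [Nat.add_sub_cancel, add_comm, Nat.add_div_right _ (Nat.two_pow_pos r),
      Nat.div_eq_of_lt ht]
  rcases Nat.lt_or_ge (s / 2 ^ p) 1 with hε | hε
  · -- top bit of s is 0
    have hε0 : s / 2 ^ ((p + 1) - 1) = 0 := by simpa using Nat.lt_one_iff.1 hε
    have e1 : ∀ t ∈ Finset.range (2 ^ r),
        f (C - 2 * Bfun (p + 1) (r + 1) s t) = f ((C - 2) - 2 * Bfun p r (s % 2 ^ p) t) := by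
      intro t ht
      rw [Bfun_succ (by omega) (by omega) (by rw [hε0, hlow t ht])]
      congr 1
      simp only [Nat.add_sub_cancel]
      rw [Nat.mod_eq_of_lt (Finset.mem_range.1 ht)]
      omega
    have e2 : ∀ t ∈ Finset.range (2 ^ r),
        f (C - 2 * Bfun (p + 1) (r + 1) s (2 ^ r + t)) = f C := by
      intro t ht
      rw [Bfun_eq_zero (by rw [hε0, hhigh t ht]; omega)]
      norm_num
    rw [Finset.sum_congr rfl e1, Finset.sum_congr rfl e2]
    simp [add_comm]
  · -- top bit of s is 1
    have hε1 : s / 2 ^ ((p + 1) - 1) = 1 := by simpa using le_antisymm hsp hε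
    have e1 : ∀ t ∈ Finset.range (2 ^ r),
        f (C - 2 * Bfun (p + 1) (r + 1) s t) = f C := by
      intro t ht
      rw [Bfun_eq_zero (by rw [hε1, hlow t ht]; omega)]
      norm_num
    have e2 : ∀ t ∈ Finset.range (2 ^ r),
        f (C - 2 * Bfun (p + 1) (r + 1) s (2 ^ r + t)) =
          f ((C - 2) - 2 * Bfun p r (s % 2 ^ p) t) := by
      intro t ht
      rw [Bfun_succ (by omega) (by omega) (by rw [hε1, hhigh t ht])]
      congr 1
      simp only [Nat.add_sub_cancel]
      rw [show ((2:ℕ) ^ r + t) % 2 ^ r = t % 2 ^ r by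
        rw [show (2:ℕ) ^ r + t = 2 ^ r * 1 + t by omega]; exact Nat.mul_add_mod _ 1 t,
        Nat.mod_eq_of_lt (Finset.mem_range.1 ht)]
      omega
    rw [Finset.sum_congr rfl e1, Finset.sum_congr rfl e2]
    simp

lemma Usum_indep (f : ℕ → ℝ) :
    ∀ r p s C, s < 2 ^ p → Usum f p r s C = Usum f p r 0 C := by
  intro r
  induction r with
  | zero =>
    intro p s C _
    unfold Usum
    simp [Bfun_r_zero]
  | succ r ih =>
    intro p s C hs
    cases p with
    | zero =>
      interval_cases s
      rfl
    | succ p =>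
      rw [Usum_succ f hs, Usum_succ f (Nat.two_pow_pos (p + 1)),
        ih p (s % 2 ^ p) (C - 2) (Nat.mod_lt _ (Nat.two_pow_pos p)),
        Nat.zero_mod]

end SplitAux

namespace SplitAux

open BTNode

variable {L : ℕ}

/-- Totalized node constructor. -/
def nodeOf (L ℓ k : ℕ) : BTNode L :=
  if h : ℓ ≤ L ∧ k < 2 ^ ℓ then ⟨⟨ℓ, by omega⟩, ⟨k, h.2⟩⟩
  else ⟨⟨0, by omega⟩, ⟨0, by norm_num⟩⟩

lemma nodeOf_spec {L ℓ k : ℕ} (hℓ : ℓ ≤ L) (hk : k < 2 ^ ℓ) :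
    nodeOf L ℓ k = ⟨⟨ℓ, by omega⟩, ⟨k, hk⟩⟩ := dif_pos ⟨hℓ, hk⟩

lemma depth_nodeOf {ℓ k : ℕ} (hℓ : ℓ ≤ L) (hk : k < 2 ^ ℓ) :
    depth (nodeOf L ℓ k) = ℓ := by rw [nodeOf_spec hℓ hk]; rfl

lemma idx_nodeOf {ℓ k : ℕ} (hℓ : ℓ ≤ L) (hk : k < 2 ^ ℓ) :
    ((nodeOf L ℓ k).2 : ℕ) = k := by rw [nodeOf_spec hℓ hk]

lemma anc_nodeOf {ℓ k : ℕ} (hℓ : ℓ ≤ L) (hk : k < 2 ^ ℓ) (a : ℕ) :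
    anc (nodeOf L ℓ k) a = k / 2 ^ (ℓ - a) := by rw [nodeOf_spec hℓ hk]; rfl

lemma nodeOf_eta (n : BTNode L) : nodeOf L (depth n) (n.2 : ℕ) = n := by
  obtain ⟨⟨ℓ, hℓ⟩, ⟨k, hk⟩⟩ := n
  exact nodeOf_spec (Nat.lt_succ_iff.mp hℓ) hk

lemma anc_eq_of_le {i j : BTNode L} {a b : ℕ} (h : anc i b = anc j b)
    (hab : a ≤ b) (hbi : b ≤ depth i) (hbj : b ≤ depth j) : anc i a = anc j a := by
  unfold anc at *
  rw [← div_pow_div hab hbi, ← div_pow_div hab hbj, h]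

section Level

variable {u : BTNode L} {r : ℕ}

lemma jk_lt (hu2 : (u.2 : ℕ) < 2 ^ depth u) {t : ℕ} (ht : t < 2 ^ r) :
    (u.2 : ℕ) * 2 ^ r + t < 2 ^ (depth u + r) := by
  have h1 : (u.2 : ℕ) * 2 ^ r + t < ((u.2 : ℕ) + 1) * 2 ^ r := by
    rw [add_mul, one_mul]
    omega
  have h2 : ((u.2 : ℕ) + 1) * 2 ^ r ≤ 2 ^ depth u * 2 ^ r :=
    Nat.mul_le_mul_right _ (by omega)
  rw [pow_add]
  omega

lemma jdiv (u2 : ℕ) {t : ℕ} (ht : t < 2 ^ r) : (u2 * 2 ^ r + t) / 2 ^ r = u2 := by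
  have := div_pow_add (x := u2) (s := t) (p := r) (b := 0) (Nat.zero_le r)
  simpa [Nat.div_eq_of_lt ht] using this

/-- For `a ≤ depth u`, the depth-`a` ancestor of the `t`-th node on the level
`depth u + r` inside `T(u)` is the depth-`a` ancestor of `u`. -/
lemma anc_j (hdr : depth u + r ≤ L) {t : ℕ} (ht : t < 2 ^ r) {a : ℕ} (ha : a ≤ depth u) :
    anc (nodeOf L (depth u + r) ((u.2 : ℕ) * 2 ^ r + t)) a = (u.2 : ℕ) / 2 ^ (depth u - a) := by
  rw [anc_nodeOf hdr (jk_lt u.2.isLt ht)]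
  have h1 : depth u + r - a = (depth u - a) + r := by omega
  rw [h1, add_comm (depth u - a) r, pow_add, ← Nat.div_div_eq_div_mul, jdiv _ ht]

lemma anc_j_d (hdr : depth u + r ≤ L) {t : ℕ} (ht : t < 2 ^ r) :
    anc (nodeOf L (depth u + r) ((u.2 : ℕ) * 2 ^ r + t)) (depth u) = (u.2 : ℕ) := by
  rw [anc_j hdr ht le_rfl]
  simp

/-- Outside the open subtree of `u`, distance to the level-`(depth u + r)` nodes of
`T(u)` does not depend on the node. -/
lemma dist_const (hdr : depth u + r ≤ L) (i : BTNode L)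
    (hout : ¬(depth u < depth i ∧ anc i (depth u) = (u.2 : ℕ)))
    {t t' : ℕ} (ht : t < 2 ^ r) (ht' : t' < 2 ^ r) :
    BTNode.dist i (nodeOf L (depth u + r) ((u.2 : ℕ) * 2 ^ r + t)) =
      BTNode.dist i (nodeOf L (depth u + r) ((u.2 : ℕ) * 2 ^ r + t')) := by
  unfold BTNode.dist lcaDepth
  rw [depth_nodeOf hdr (jk_lt u.2.isLt ht), depth_nodeOf hdr (jk_lt u.2.isLt ht')]
  congr 2
  apply fg_congr
  intro a ha
  by_cases had : a ≤ depth u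
  · rw [anc_j hdr ht had, anc_j hdr ht' had]
  · have key : ∀ t'' : ℕ, t'' < 2 ^ r →
        ¬ anc i a = anc (nodeOf L (depth u + r) ((u.2 : ℕ) * 2 ^ r + t'')) a := by
      intro t'' ht'' h
      apply hout
      have hai : a ≤ depth i := le_trans ha (min_le_left _ _)
      have haj : a ≤ depth (nodeOf L (depth u + r) ((u.2 : ℕ) * 2 ^ r + t'')) := by
        rw [depth_nodeOf hdr (jk_lt u.2.isLt ht'')]
        exact le_trans ha (min_le_right _ _)
      have := anc_eq_of_le h (show depth u ≤ a by omega) hai haj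
      rw [anc_j_d hdr ht''] at this
      exact ⟨by omega, this⟩
    exact iff_of_false (key t ht) (key t' ht')

/-- Inside the subtree, the LCA depth is given by `Bfun` on relative indices. -/
lemma lca_inside {p : ℕ} (hdr : depth u + r ≤ L)
    {i : BTNode L} (hpi : depth i = depth u + p) (hp : 1 ≤ p)
    (hanc : anc i (depth u) = (u.2 : ℕ)) {t : ℕ} (ht : t < 2 ^ r) :
    lcaDepth i (nodeOf L (depth u + r) ((u.2 : ℕ) * 2 ^ r + t)) =
      depth u + Bfun p r ((i.2 : ℕ) % 2 ^ p) t := by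
  have hi2 : (i.2 : ℕ) = (u.2 : ℕ) * 2 ^ p + (i.2 : ℕ) % 2 ^ p := by
    have h1 : anc i (depth u) = (i.2 : ℕ) / 2 ^ p := by
      unfold anc
      congr 2
      omega
    have := Nat.div_add_mod (i.2 : ℕ) (2 ^ p)
    rw [← hanc, h1, mul_comm]
    omega
  unfold lcaDepth Bfun
  rw [depth_nodeOf hdr (jk_lt u.2.isLt ht), hpi,
    show min (depth u + p) (depth u + r) = depth u + min p r by omega]
  apply fg_shift
  · rw [anc_j_d hdr ht, hanc]
  · intro b hb hbN
    have hbp : b ≤ p := le_trans hbN (min_le_left _ _)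
    have hbr : b ≤ r := le_trans hbN (min_le_right _ _)
    have h1 : anc i (depth u + b) = (u.2 : ℕ) * 2 ^ b + ((i.2 : ℕ) % 2 ^ p) / 2 ^ (p - b) := by
      unfold anc
      rw [hpi, show depth u + p - (depth u + b) = p - b by omega]
      conv_lhs => rw [hi2]
      exact div_pow_add hbp
    have h2 : anc (nodeOf L (depth u + r) ((u.2 : ℕ) * 2 ^ r + t)) (depth u + b)
        = (u.2 : ℕ) * 2 ^ b + t / 2 ^ (r - b) := by
      rw [anc_nodeOf hdr (jk_lt u.2.isLt ht),
        show depth u + r - (depth u + b) = r - b by omega]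
      exact div_pow_add hbr
    rw [h1, h2]
    exact add_right_inj _

lemma dist_inside {p : ℕ} (hdr : depth u + r ≤ L)
    {i : BTNode L} (hpi : depth i = depth u + p) (hp : 1 ≤ p)
    (hanc : anc i (depth u) = (u.2 : ℕ)) {t : ℕ} (ht : t < 2 ^ r) :
    BTNode.dist i (nodeOf L (depth u + r) ((u.2 : ℕ) * 2 ^ r + t)) =
      p + r - 2 * Bfun p r ((i.2 : ℕ) % 2 ^ p) t := by
  have hB := Bfun_le p r ((i.2 : ℕ) % 2 ^ p) t
  unfold BTNode.dist
  rw [lca_inside hdr hpi hp hanc ht, depth_nodeOf hdr (jk_lt u.2.isLt ht), hpi]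
  omega

/-- Value of the wavelet mode on the `t`-th node of its level. -/
lemma wavelet_j (hr : 1 ≤ r) (hdr : depth u + r ≤ L) {t : ℕ} (ht : t < 2 ^ r) :
    waveletMode u r (nodeOf L (depth u + r) ((u.2 : ℕ) * 2 ^ r + t)) =
      (if t / 2 ^ (r - 1) % 2 = 0 then (1 : ℝ) else -1) * ((Real.sqrt 2)⁻¹) ^ r := by
  unfold waveletMode
  rw [depth_nodeOf hdr (jk_lt u.2.isLt ht),
    anc_nodeOf hdr (jk_lt u.2.isLt ht), anc_nodeOf hdr (jk_lt u.2.isLt ht)]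
  rw [if_pos (by rw [show depth u + r - depth u = r by omega]; exact ⟨rfl, jdiv _ ht⟩)]
  have h1 : ((u.2 : ℕ) * 2 ^ r + t) / 2 ^ (depth u + r - (depth u + 1)) =
      (u.2 : ℕ) * 2 + t / 2 ^ (r - 1) := by
    rw [show depth u + r - (depth u + 1) = r - 1 by omega]
    have := div_pow_add (x := (u.2 : ℕ)) (s := t) (p := r) (b := 1) hr
    simpa using this
  rw [h1]
  congr 1
  have h2 : ((u.2 : ℕ) * 2 + t / 2 ^ (r - 1)) % 2 = t / 2 ^ (r - 1) % 2 := by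
    rw [mul_comm, Nat.mul_add_mod]
  rw [h2]

lemma wavelet_zero {j : BTNode L}
    (h : ¬(depth j = depth u + r ∧ anc j (depth u) = (u.2 : ℕ))) :
    waveletMode u r j = 0 := if_neg h

/-- Reduce a sum over all nodes to a sum over the level `depth u + r` inside `T(u)`,
provided the summand vanishes elsewhere. -/
lemma sum_reduce (hdr : depth u + r ≤ L) (F : BTNode L → ℝ)
    (hF : ∀ j, ¬(depth j = depth u + r ∧ anc j (depth u) = (u.2 : ℕ)) → F j = 0) :
    ∑ j : BTNode L, F j =
      ∑ t ∈ Finset.range (2 ^ r), F (nodeOf L (depth u + r) ((u.2 : ℕ) * 2 ^ r + t)) := by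
  classical
  rw [← Finset.sum_filter_of_ne
    (p := fun j => depth j = depth u + r ∧ anc j (depth u) = (u.2 : ℕ))
    (fun j _ hj => by by_contra h; exact hj (hF j h))]
  refine Finset.sum_nbij' (i := fun j => (j.2 : ℕ) % 2 ^ r)
    (j := fun t => nodeOf L (depth u + r) ((u.2 : ℕ) * 2 ^ r + t)) ?_ ?_ ?_ ?_ ?_
  · intro j hj
    exact Finset.mem_range.2 (Nat.mod_lt _ (Nat.two_pow_pos r))
  · intro t ht
    simp only [Finset.mem_range] at ht
    refine Finset.mem_filter.2 ⟨Finset.mem_univ _,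
      depth_nodeOf hdr (jk_lt u.2.isLt ht), anc_j_d hdr ht⟩
  · intro j hj
    obtain ⟨-, hd, ha⟩ := Finset.mem_filter.1 hj
    have hdiv : (j.2 : ℕ) / 2 ^ r = (u.2 : ℕ) := by
      rw [← ha]
      unfold anc
      congr 2
      omega
    have hk : (u.2 : ℕ) * 2 ^ r + (j.2 : ℕ) % 2 ^ r = (j.2 : ℕ) := by
      have := Nat.div_add_mod (j.2 : ℕ) (2 ^ r)
      rw [← hdiv, mul_comm]
      omega
    show nodeOf L (depth u + r) ((u.2 : ℕ) * 2 ^ r + (j.2 : ℕ) % 2 ^ r) = j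
    rw [hk, ← hd, nodeOf_eta]
  · intro t ht
    simp only [Finset.mem_range] at ht
    show ((nodeOf L (depth u + r) ((u.2 : ℕ) * 2 ^ r + t)).2 : ℕ) % 2 ^ r = t
    rw [idx_nodeOf hdr (jk_lt u.2.isLt ht),
      show (u.2 : ℕ) * 2 ^ r + t = 2 ^ r * (u.2 : ℕ) + t by ring, Nat.mul_add_mod,
      Nat.mod_eq_of_lt ht]
  · intro j hj
    obtain ⟨-, hd, ha⟩ := Finset.mem_filter.1 hj
    have hdiv : (j.2 : ℕ) / 2 ^ r = (u.2 : ℕ) := by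
      rw [← ha]
      unfold anc
      congr 2
      omega
    have hk : (u.2 : ℕ) * 2 ^ r + (j.2 : ℕ) % 2 ^ r = (j.2 : ℕ) := by
      have := Nat.div_add_mod (j.2 : ℕ) (2 ^ r)
      rw [← hdiv, mul_comm]
      omega
    show F j = F (nodeOf L (depth u + r) ((u.2 : ℕ) * 2 ^ r + (j.2 : ℕ) % 2 ^ r))
    rw [hk, ← hd, nodeOf_eta]

end Level

end SplitAux

namespace SplitAux

open BTNode

variable {L : ℕ}

lemma sign_sum {r : ℕ} (hr : 1 ≤ r) :
    ∑ t ∈ Finset.range (2 ^ r), (if t / 2 ^ (r - 1) % 2 = 0 then (1 : ℝ) else -1) = 0 := by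
  obtain ⟨r', rfl⟩ : ∃ r', r = r' + 1 := ⟨r - 1, by omega⟩
  rw [show (2 : ℕ) ^ (r' + 1) = 2 ^ r' + 2 ^ r' by rw [pow_succ]; omega,
    Finset.sum_range_add]
  have e1 : ∀ t ∈ Finset.range (2 ^ r'),
      (if t / 2 ^ (r' + 1 - 1) % 2 = 0 then (1 : ℝ) else -1) = 1 := by
    intro t ht
    rw [if_pos (by rw [Nat.add_sub_cancel, Nat.div_eq_of_lt (Finset.mem_range.1 ht)])]
  have e2 : ∀ t ∈ Finset.range (2 ^ r'),
      (if (2 ^ r' + t) / 2 ^ (r' + 1 - 1) % 2 = 0 then (1 : ℝ) else -1) = -1 := by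
    intro t ht
    rw [if_neg]
    rw [Nat.add_sub_cancel, add_comm, Nat.add_div_right _ (Nat.two_pow_pos r'),
      Nat.div_eq_of_lt (Finset.mem_range.1 ht)]
    norm_num
  rw [Finset.sum_congr rfl e1, Finset.sum_congr rfl e2]
  simp

lemma idx_decomp {u : BTNode L} {p : ℕ} {i : BTNode L}
    (hpi : depth i = depth u + p) (hanc : anc i (depth u) = (u.2 : ℕ)) :
    (i.2 : ℕ) = (u.2 : ℕ) * 2 ^ p + (i.2 : ℕ) % 2 ^ p := by
  have h1 : anc i (depth u) = (i.2 : ℕ) / 2 ^ p := by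
    unfold anc
    congr 2
    omega
  have := Nat.div_add_mod (i.2 : ℕ) (2 ^ p)
  rw [← hanc, h1, mul_comm]
  omega

/-- The heart of the proof: `M ψ_{u,r}` is an explicit combination of the `ψ_{u,p}`. -/
lemma key_formula (f : ℕ → ℝ) (u : BTNode L) {r : ℕ} (hr1 : 1 ≤ r) (hr2 : r ≤ L - depth u)
    (hu : depth u < L) :
    (fun i => ∑ j : BTNode L, f (BTNode.dist i j) * waveletMode u r j) =
      ∑ p ∈ Finset.Icc 1 (L - depth u),
        (Real.sqrt 2 ^ p * (((Real.sqrt 2)⁻¹) ^ r *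
          (Usum f (p - 1) (r - 1) 0 (p + r - 2) - 2 ^ (r - 1) * f (p + r)))) •
            waveletMode u p := by
  have hdr : depth u + r ≤ L := by omega
  have h2r : (0 : ℕ) < 2 ^ r := Nat.two_pow_pos r
  funext i
  rw [sum_reduce hdr _ (fun j hj => by rw [wavelet_zero hj, mul_zero])]
  simp only [Finset.sum_apply, Pi.smul_apply, smul_eq_mul]
  by_cases hin : depth u < depth i ∧ anc i (depth u) = (u.2 : ℕ)
  · -- Inside the open subtree of u
    obtain ⟨hd, hanc⟩ := hin
    set p : ℕ := depth i - depth u with hp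
    have hp1 : 1 ≤ p := by omega
    have hpi : depth i = depth u + p := by omega
    have hpL : p ≤ L - depth u := by
      have : depth i ≤ L := by
        have := i.1.isLt
        unfold depth
        omega
      omega
    set s : ℕ := (i.2 : ℕ) % 2 ^ p with hs
    have hslt : s < 2 ^ p := Nat.mod_lt _ (Nat.two_pow_pos p)
    have hεle : s / 2 ^ (p - 1) ≤ 1 := by
      have h2 : s < 2 * 2 ^ (p - 1) := by
        have : 2 * 2 ^ (p - 1) = 2 ^ p := by
          rw [← pow_succ']
          congr 1
          omega
        omega
      have h3 : s / 2 ^ (p - 1) < 2 := Nat.div_lt_of_lt_mul (by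
        rw [mul_comm]
        exact h2)
      omega
    -- rewrite LHS summands via dist_inside and wavelet_j
    have lhs1 : ∀ t ∈ Finset.range (2 ^ r),
        f (BTNode.dist i (nodeOf L (depth u + r) ((u.2 : ℕ) * 2 ^ r + t))) *
          waveletMode u r (nodeOf L (depth u + r) ((u.2 : ℕ) * 2 ^ r + t)) =
        f (p + r - 2 * Bfun p r s t) *
          ((if t / 2 ^ (r - 1) % 2 = 0 then (1 : ℝ) else -1) * ((Real.sqrt 2)⁻¹) ^ r) := by
      intro t ht
      rw [dist_inside hdr hpi hp1 hanc (Finset.mem_range.1 ht),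
        wavelet_j hr1 hdr (Finset.mem_range.1 ht)]
    rw [Finset.sum_congr rfl lhs1]
    -- split the sum in two halves
    rw [show (2 : ℕ) ^ r = 2 ^ (r - 1) + 2 ^ (r - 1) by
        rw [← two_mul, ← pow_succ']; congr 1; omega,
      Finset.sum_range_add]
    have hlowdiv : ∀ t ∈ Finset.range (2 ^ (r - 1)), t / 2 ^ (r - 1) = 0 :=
      fun t ht => Nat.div_eq_of_lt (Finset.mem_range.1 ht)
    have hhighdiv : ∀ t ∈ Finset.range (2 ^ (r - 1)), (2 ^ (r - 1) + t) / 2 ^ (r - 1) = 1 :=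
      fun t ht => by
        rw [add_comm, Nat.add_div_right _ (Nat.two_pow_pos _),
          Nat.div_eq_of_lt (Finset.mem_range.1 ht)]
    have hlowlt : ∀ t ∈ Finset.range (2 ^ (r - 1)), t < 2 ^ r := fun t ht => by
      have := Finset.mem_range.1 ht
      have h2 : (2:ℕ) ^ (r - 1) ≤ 2 ^ r := Nat.pow_le_pow_right (by norm_num) (by omega)
      omega
    have hhighlt : ∀ t ∈ Finset.range (2 ^ (r - 1)), 2 ^ (r - 1) + t < 2 ^ r := fun t ht => by
      have := Finset.mem_range.1 ht
      have h2 : (2:ℕ) ^ (r - 1) + 2 ^ (r - 1) = 2 ^ r := by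
        rw [← two_mul, ← pow_succ']; congr 1; omega
      omega
    -- Value of the LHS
    have main : (∑ t ∈ Finset.range (2 ^ (r - 1)), f (p + r - 2 * Bfun p r s t) *
          ((if t / 2 ^ (r - 1) % 2 = 0 then (1 : ℝ) else -1) * ((Real.sqrt 2)⁻¹) ^ r)) +
        (∑ t ∈ Finset.range (2 ^ (r - 1)), f (p + r - 2 * Bfun p r s (2 ^ (r - 1) + t)) *
          ((if (2 ^ (r - 1) + t) / 2 ^ (r - 1) % 2 = 0 then (1 : ℝ) else -1) *
            ((Real.sqrt 2)⁻¹) ^ r)) =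
        (if s / 2 ^ (p - 1) % 2 = 0 then (1 : ℝ) else -1) * (((Real.sqrt 2)⁻¹) ^ r *
          (Usum f (p - 1) (r - 1) 0 (p + r - 2) - 2 ^ (r - 1) * f (p + r))) := by
      rcases Nat.lt_or_ge (s / 2 ^ (p - 1)) 1 with hε | hε
      · -- top bit of s is 0 : sign +1
        have hε0 : s / 2 ^ (p - 1) = 0 := Nat.lt_one_iff.mp hε
        have e1 : ∀ t ∈ Finset.range (2 ^ (r - 1)),
            f (p + r - 2 * Bfun p r s t) *
              ((if t / 2 ^ (r - 1) % 2 = 0 then (1 : ℝ) else -1) * ((Real.sqrt 2)⁻¹) ^ r) =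
            ((Real.sqrt 2)⁻¹) ^ r * f ((p + r - 2) - 2 * Bfun (p-1) (r-1) (s % 2 ^ (p-1)) t) := by
          intro t ht
          rw [if_pos (by rw [hlowdiv t ht]), Bfun_succ hp1 hr1 (by rw [hε0, hlowdiv t ht]),
            show p + r - 2 * (1 + Bfun (p-1) (r-1) (s % 2^(p-1)) (t % 2^(r-1)))
              = (p + r - 2) - 2 * Bfun (p-1) (r-1) (s % 2^(p-1)) (t % 2^(r-1)) by omega,
            Nat.mod_eq_of_lt (Finset.mem_range.1 ht)]
          ring
        have e2 : ∀ t ∈ Finset.range (2 ^ (r - 1)),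
            f (p + r - 2 * Bfun p r s (2 ^ (r - 1) + t)) *
              ((if (2 ^ (r - 1) + t) / 2 ^ (r - 1) % 2 = 0 then (1 : ℝ) else -1) *
                ((Real.sqrt 2)⁻¹) ^ r) =
            -(((Real.sqrt 2)⁻¹) ^ r * f (p + r)) := by
          intro t ht
          rw [if_neg (by rw [hhighdiv t ht]; norm_num),
            Bfun_eq_zero (by rw [hε0, hhighdiv t ht]; omega)]
          norm_num
          ring
        rw [Finset.sum_congr rfl e1, Finset.sum_congr rfl e2, ← Finset.mul_sum,
          Finset.sum_const, Finset.card_range, if_pos (by rw [hε0])]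
        have hU : ∑ t ∈ Finset.range (2 ^ (r - 1)),
            f ((p + r - 2) - 2 * Bfun (p-1) (r-1) (s % 2 ^ (p-1)) t)
            = Usum f (p-1) (r-1) 0 (p + r - 2) := by
          rw [show (∑ t ∈ Finset.range (2 ^ (r - 1)),
              f ((p + r - 2) - 2 * Bfun (p-1) (r-1) (s % 2 ^ (p-1)) t))
              = Usum f (p-1) (r-1) (s % 2 ^ (p-1)) (p + r - 2) from rfl]
          exact Usum_indep f _ _ _ _ (Nat.mod_lt _ (Nat.two_pow_pos _))
        rw [hU]
        ring
      · -- top bit of s is 1 : sign -1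
        have hε1 : s / 2 ^ (p - 1) = 1 := le_antisymm hεle hε
        have e1 : ∀ t ∈ Finset.range (2 ^ (r - 1)),
            f (p + r - 2 * Bfun p r s t) *
              ((if t / 2 ^ (r - 1) % 2 = 0 then (1 : ℝ) else -1) * ((Real.sqrt 2)⁻¹) ^ r) =
            ((Real.sqrt 2)⁻¹) ^ r * f (p + r) := by
          intro t ht
          rw [if_pos (by rw [hlowdiv t ht]),
            Bfun_eq_zero (by rw [hε1, hlowdiv t ht]; omega)]
          norm_num
          ring
        have e2 : ∀ t ∈ Finset.range (2 ^ (r - 1)),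
            f (p + r - 2 * Bfun p r s (2 ^ (r - 1) + t)) *
              ((if (2 ^ (r - 1) + t) / 2 ^ (r - 1) % 2 = 0 then (1 : ℝ) else -1) *
                ((Real.sqrt 2)⁻¹) ^ r) =
            -(((Real.sqrt 2)⁻¹) ^ r *
              f ((p + r - 2) - 2 * Bfun (p-1) (r-1) (s % 2 ^ (p-1)) t)) := by
          intro t ht
          rw [if_neg (by rw [hhighdiv t ht]; norm_num),
            Bfun_succ hp1 hr1 (by rw [hε1, hhighdiv t ht]),
            show ((2:ℕ) ^ (r-1) + t) % 2 ^ (r-1) = t % 2 ^ (r-1) by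
              rw [show (2:ℕ) ^ (r-1) + t = 2 ^ (r-1) * 1 + t by omega]
              exact Nat.mul_add_mod _ 1 t,
            show p + r - 2 * (1 + Bfun (p-1) (r-1) (s % 2^(p-1)) (t % 2^(r-1)))
              = (p + r - 2) - 2 * Bfun (p-1) (r-1) (s % 2^(p-1)) (t % 2^(r-1)) by omega,
            Nat.mod_eq_of_lt (Finset.mem_range.1 ht)]
          ring
        have hU : ∑ t ∈ Finset.range (2 ^ (r - 1)),
            f ((p + r - 2) - 2 * Bfun (p-1) (r-1) (s % 2 ^ (p-1)) t)
            = Usum f (p-1) (r-1) 0 (p + r - 2) := by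
          rw [show (∑ t ∈ Finset.range (2 ^ (r - 1)),
              f ((p + r - 2) - 2 * Bfun (p-1) (r-1) (s % 2 ^ (p-1)) t))
              = Usum f (p-1) (r-1) (s % 2 ^ (p-1)) (p + r - 2) from rfl]
          exact Usum_indep f _ _ _ _ (Nat.mod_lt _ (Nat.two_pow_pos _))
        rw [Finset.sum_congr rfl e1, Finset.sum_congr rfl e2, Finset.sum_neg_distrib,
          Finset.sum_const, Finset.card_range, ← Finset.mul_sum, hU,
          if_neg (by rw [hε1]; norm_num)]
        ring
    rw [main]
    -- Now compute the RHS
    rw [Finset.sum_eq_single_of_mem p (Finset.mem_Icc.2 ⟨hp1, hpL⟩)]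
    · have hψ : waveletMode u p i =
          (if s / 2 ^ (p - 1) % 2 = 0 then (1 : ℝ) else -1) * ((Real.sqrt 2)⁻¹) ^ p := by
        unfold waveletMode
        rw [if_pos ⟨hpi, hanc⟩]
        congr 2
        have h1 : anc i (depth u + 1) = (u.2 : ℕ) * 2 + s / 2 ^ (p - 1) := by
          unfold anc
          rw [hpi, show depth u + p - (depth u + 1) = p - 1 by omega]
          conv_lhs => rw [idx_decomp hpi hanc]
          have := div_pow_add (x := (u.2 : ℕ)) (s := s) (p := p) (b := 1) hp1
          simpa using this
        rw [h1, mul_comm, Nat.mul_add_mod]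
      rw [hψ]
      have hsqrt : Real.sqrt 2 ^ p * ((Real.sqrt 2)⁻¹) ^ p = 1 := by
        rw [← mul_pow, mul_inv_cancel₀ (Real.sqrt_pos.2 (by norm_num)).ne', one_pow]
      rcases eq_or_ne (s / 2 ^ (p - 1) % 2) 0 with h | h
      · rw [if_pos h]
        linear_combination (-((Real.sqrt 2)⁻¹ ^ r *
          (Usum f (p - 1) (r - 1) 0 (p + r - 2) - 2 ^ (r - 1) * f (p + r)))) * hsqrt
      · rw [if_neg h]
        linear_combination ((Real.sqrt 2)⁻¹ ^ r *
          (Usum f (p - 1) (r - 1) 0 (p + r - 2) - 2 ^ (r - 1) * f (p + r))) * hsqrt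
    · intro p' hp' hne
      rw [wavelet_zero (fun hcon => hne (by omega)), mul_zero]
  · -- outside: both sides vanish
    have h0 : (0 : ℕ) < 2 ^ r := h2r
    have lhs0 : ∀ t ∈ Finset.range (2 ^ r),
        f (BTNode.dist i (nodeOf L (depth u + r) ((u.2 : ℕ) * 2 ^ r + t))) *
          waveletMode u r (nodeOf L (depth u + r) ((u.2 : ℕ) * 2 ^ r + t)) =
        (f (BTNode.dist i (nodeOf L (depth u + r) ((u.2 : ℕ) * 2 ^ r + 0))) *
          ((Real.sqrt 2)⁻¹) ^ r) * (if t / 2 ^ (r - 1) % 2 = 0 then (1 : ℝ) else -1) := by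
      intro t ht
      rw [wavelet_j hr1 hdr (Finset.mem_range.1 ht),
        dist_const hdr i hin (Finset.mem_range.1 ht) h0]
      ring
    rw [Finset.sum_congr rfl lhs0, ← Finset.mul_sum, sign_sum hr1, mul_zero]
    symm
    apply Finset.sum_eq_zero
    intro p hp
    have hp1 := (Finset.mem_Icc.1 hp).1
    rw [wavelet_zero (fun hcon => hin ⟨by omega, hcon.2⟩), mul_zero]

end SplitAux

/-- for `M_{ij} = f(dist(i,j))` on the full binary tree of depth `L` and
arbitrary `f : ℕ → ℝ`, every split space `S^u` is invariant under `M`: `M S^u ⊆ S^u`. -/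
theorem distance_kernel_preserves_split_space (L : ℕ) (f : ℕ → ℝ)
    (u : BTNode L) (hu : BTNode.depth u < L) :
    ∀ x ∈ splitSpace L u,
      (fun i => ∑ j : BTNode L, f (BTNode.dist i j) * x j) ∈ splitSpace L u := by
  intro x hx
  induction hx using Submodule.span_induction with
  | mem v hv =>
    obtain ⟨r, hr1, hr2, rfl⟩ := hv
    rw [SplitAux.key_formula f u hr1 hr2 hu]
    apply Submodule.sum_mem
    intro p hp
    obtain ⟨hp1, hp2⟩ := Finset.mem_Icc.1 hp
    exact Submodule.smul_mem _ _ (Submodule.subset_span ⟨p, hp1, hp2, rfl⟩)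
  | zero =>
    have h0 : (fun i => ∑ j : BTNode L, f (BTNode.dist i j) * (0 : BTNode L → ℝ) j)
        = 0 := by
      funext i
      simp
    rw [h0]
    exact (splitSpace L u).zero_mem
  | add a b ha hb hA hB =>
    have h0 : (fun i => ∑ j : BTNode L, f (BTNode.dist i j) * (a + b) j)
        = (fun i => ∑ j : BTNode L, f (BTNode.dist i j) * a j)
          + (fun i => ∑ j : BTNode L, f (BTNode.dist i j) * b j) := by
      funext i
      simp [mul_add, Finset.sum_add_distrib]
    rw [h0]
    exact (splitSpace L u).add_mem hA hB
  | smul c a ha hA =>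
    have h0 : (fun i => ∑ j : BTNode L, f (BTNode.dist i j) * (c • a) j)
        = c • (fun i => ∑ j : BTNode L, f (BTNode.dist i j) * a j) := by
      funext i
      simp only [Pi.smul_apply, smul_eq_mul, Finset.mul_sum]
      apply Finset.sum_congr rfl
      intro j _
      ring
    rw [h0]
    exact (splitSpace L u).smul_mem c hA
end

section
/- For the split block A^{(h)} with entries A^{(h)}_{r,s} = 2^{-(r+s)/2}[ -2^{r+s-1} f(r+s) + Σ_{a=1}^{min(r,s)-1} 2^{r+s-a-1} f(r+s-2a) + 2^{max(r,s)} f(|r-s|) ], if f is strictly decreasing then every entry A^{(h)}_{r,s} is strictly positive. -/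
lemma geom_aux (N n : ℕ) (h1 : 1 ≤ n) (h2 : n ≤ N) :
    ∑ a ∈ Finset.Icc 1 (n - 1), (2 : ℝ) ^ (N - a - 1) = 2 ^ (N - 1) - 2 ^ (N - n) := by
  induction n with
  | zero => omega
  | succ k ih =>
    rcases Nat.eq_zero_or_pos k with hk | hk
    · subst hk; simp
    · have hIcc : (k + 1) - 1 = (k - 1) + 1 := by omega
      rw [hIcc, Finset.sum_Icc_succ_top (by omega : 1 ≤ k - 1 + 1)]
      rw [show k - 1 + 1 = k from by omega]
      rw [ih hk (by omega)]
      have he1 : N - k = (N - (k + 1)) + 1 := by omega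
      rw [he1, pow_succ]; simp only [Nat.add_sub_cancel]
      ring

/-- for the split block
`A^{(h)}_{r,s} = 2^{-(r+s)/2} [ -2^{r+s-1} f(r+s) + Σ_{a=1}^{min(r,s)-1} 2^{r+s-a-1} f(r+s-2a)
+ 2^{max(r,s)} f(|r-s|) ]` with `1 ≤ r, s ≤ h`, if `f : ℕ → ℝ` is strictly decreasing then
every entry is strictly positive. -/
theorem split_block_entries_positive (h r s : ℕ) (hr : 1 ≤ r) (hrh : r ≤ h)
    (hs : 1 ≤ s) (hsh : s ≤ h) (f : ℕ → ℝ) (hf : StrictAnti f) :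
    0 < ((Real.sqrt 2)⁻¹) ^ (r + s) *
      (-(2 : ℝ) ^ (r + s - 1) * f (r + s)
        + ∑ a ∈ Finset.Icc 1 (min r s - 1), (2 : ℝ) ^ (r + s - a - 1) * f (r + s - 2 * a)
        + (2 : ℝ) ^ max r s * f (Nat.dist r s)) := by
  have hfac : (0 : ℝ) < ((Real.sqrt 2)⁻¹) ^ (r + s) :=
    pow_pos (inv_pos.2 (Real.sqrt_pos.2 two_pos)) _
  refine mul_pos hfac ?_
  have hmm : min r s ≤ r + s := by omega
  have hMeq : r + s - min r s = max r s := by omega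
  have key : ∑ a ∈ Finset.Icc 1 (min r s - 1), (2 : ℝ) ^ (r + s - a - 1)
      = 2 ^ (r + s - 1) - 2 ^ (max r s) := by
    rw [geom_aux (r + s) (min r s) (by omega) hmm, hMeq]
  have hsum : ∑ a ∈ Finset.Icc 1 (min r s - 1), (2 : ℝ) ^ (r + s - a - 1) * f (r + s)
      ≤ ∑ a ∈ Finset.Icc 1 (min r s - 1), (2 : ℝ) ^ (r + s - a - 1) * f (r + s - 2 * a) := by
    refine Finset.sum_le_sum fun a _ => ?_
    exact mul_le_mul_of_nonneg_left (hf.antitone (Nat.sub_le _ _)) (by positivity)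
  rw [← Finset.sum_mul, key] at hsum
  have hdist : Nat.dist r s < r + s := by
    simp only [Nat.dist]; omega
  have hM : (2 : ℝ) ^ (max r s) * f (r + s) < 2 ^ (max r s) * f (Nat.dist r s) :=
    mul_lt_mul_of_pos_left (hf hdist) (by positivity)
  nlinarith [hsum, hM]
end

section
/- The exponential tree kernel is positive semidefinite: for any finite tree T with graph distance dist and any β > 0, the matrix K with entries K_{ij} = e^{-β·dist(i,j)} is positive semidefinite. -/
open Classical in
/-- Parity/side lemma: an edge `e` of an acyclic graph lies on a path `w : i → j`
iff `i` and `j` are on different sides of the cut induced by deleting `e`. -/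
lemma tree_edge_mem_path_iff {V : Type*} (G : SimpleGraph V) (hA : G.IsAcyclic)
    (e : Sym2 V) (he : e ∈ G.edgeSet) {i j : V} (w : G.Walk i j) (hw : w.IsPath) :
    (e ∈ w.edges ↔
      ¬(((G.deleteEdges {e}).Reachable e.out.1 i) ↔
        ((G.deleteEdges {e}).Reachable e.out.1 j))) := by
  have hout : s(e.out.1, e.out.2) = e := by
    rw [← Prod.mk.eta (p := e.out)]; exact e.out_eq
  have hbridge : ¬ (G.deleteEdges {e}).Reachable e.out.1 e.out.2 := by
    have hb := (SimpleGraph.isAcyclic_iff_forall_edge_isBridge.mp hA) he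
    rw [← hout] at hb
    have hb2 := SimpleGraph.isBridge_iff.mp hb
    rw [hout] at hb2
    exact hb2
  induction w with
  | nil => simp
  | @cons a b c hab p ih =>
    have hp : p.IsPath := hw.of_cons
    have ihp := ih hp
    rw [SimpleGraph.Walk.edges_cons, List.mem_cons]
    by_cases hcase : e = s(a, b)
    · -- the first edge is `e`
      have hnot : e ∉ p.edges := by
        have := hw.edges_nodup
        rw [SimpleGraph.Walk.edges_cons, ← hcase] at this
        exact (List.nodup_cons.mp this).1
      have hbc : (G.deleteEdges {e}).Reachable e.out.1 b ↔
          (G.deleteEdges {e}).Reachable e.out.1 c := by tauto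
      have hends : (a = e.out.1 ∧ b = e.out.2) ∨ (a = e.out.2 ∧ b = e.out.1) := by
        rw [← hout] at hcase
        exact Sym2.eq_iff.mp hcase.symm
      have hab' : ¬((G.deleteEdges {e}).Reachable e.out.1 a ↔
          (G.deleteEdges {e}).Reachable e.out.1 b) := by
        rcases hends with ⟨rfl, rfl⟩ | ⟨rfl, rfl⟩
        · simp only [iff_iff_implies_and_implies]
          intro ⟨h1, _⟩
          exact hbridge (h1 (SimpleGraph.Reachable.refl _))
        · simp only [iff_iff_implies_and_implies]
          intro ⟨_, h2⟩
          exact hbridge (h2 (SimpleGraph.Reachable.refl _))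
      constructor
      · intro _; tauto
      · intro _; left; exact hcase
    · -- the first edge is not `e`
      have hadj : (G.deleteEdges {e}).Adj a b := by
        rw [SimpleGraph.deleteEdges_adj]
        refine ⟨hab, ?_⟩
        simp only [Set.mem_singleton_iff]
        intro h; exact hcase h.symm
      have hab' : (G.deleteEdges {e}).Reachable e.out.1 a ↔
          (G.deleteEdges {e}).Reachable e.out.1 b := by
        constructor
        · intro h; exact h.trans hadj.reachable
        · intro h; exact h.trans hadj.symm.reachable
      constructor
      · rintro (h | h)
        · exact absurd h hcase
        · tauto
      · intro h; right; tauto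

/-- the exponential tree kernel is positive semidefinite.  For any finite
tree `G` (connected acyclic simple graph) with graph distance `dist` and any `β > 0`,
the matrix `K_{ij} = e^{-β·dist(i,j)}` is positive semidefinite. -/
theorem exponential_tree_kernel_posSemidef {V : Type*} [Fintype V]
    (G : SimpleGraph V) (hG : G.IsTree) (β : ℝ) (hβ : 0 < β)
    (K : Matrix V V ℝ) (hK : ∀ i j : V, K i j = Real.exp (-β * (G.dist i j : ℝ))) :
    K.PosSemidef := by
  classical
  haveI : Fintype G.edgeSet := Fintype.ofFinite _
  set q : ℝ := Real.exp (-β) with hqdef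
  have hq0 : 0 < q := Real.exp_pos _
  have hq1 : q ≤ 1 := Real.exp_le_one_iff.mpr (by linarith)
  -- the side predicate and its ±1 version
  set σ : Sym2 V → V → Prop := fun e i => (G.deleteEdges {e}).Reachable e.out.1 i with hσ
  set x : Sym2 V → V → ℝ := fun e i => if σ e i then 1 else -1 with hx
  -- distance as a sum of cut indicators
  have hdist : ∀ i j : V, (G.dist i j : ℝ) =
      ∑ e ∈ G.edgeFinset, (if ¬(σ e i ↔ σ e j) then (1 : ℝ) else 0) := by
    intro i j
    obtain ⟨w, hwlen⟩ := hG.isConnected.exists_walk_length_eq_dist i j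
    set p := w.bypass with hp
    have hppath : p.IsPath := w.bypass_isPath
    have hlen : p.length = G.dist i j :=
      le_antisymm (hwlen ▸ w.length_bypass_le) (SimpleGraph.dist_le p)
    have hcard : p.edges.toFinset.card = G.dist i j := by
      rw [List.toFinset_card_of_nodup hppath.edges_nodup, SimpleGraph.Walk.length_edges, hlen]
    have hfilter : G.edgeFinset.filter (· ∈ p.edges) = p.edges.toFinset := by
      ext e
      simp only [Finset.mem_filter, List.mem_toFinset, SimpleGraph.mem_edgeFinset]
      exact ⟨fun h => h.2, fun h => ⟨p.edges_subset_edgeSet h, h⟩⟩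
    have hsum1 : ∑ e ∈ G.edgeFinset, (if e ∈ p.edges then (1 : ℝ) else 0)
        = (G.dist i j : ℝ) := by
      rw [Finset.sum_boole, hfilter, hcard]
    rw [← hsum1]
    refine Finset.sum_congr rfl fun e hmem => ?_
    have he : e ∈ G.edgeSet := SimpleGraph.mem_edgeFinset.mp hmem
    have hiff := tree_edge_mem_path_iff G hG.2 e he p hppath
    by_cases h : e ∈ p.edges
    · rw [if_pos h, if_pos (hiff.mp h)]
    · rw [if_neg h]
      rw [if_neg (fun hc => h (hiff.mpr hc))]
  -- kernel as a product over edges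
  have hprod : ∀ i j : V, K i j =
      ∏ e ∈ G.edgeFinset, ((1 + q) / 2 + (1 - q) / 2 * x e i * x e j) := by
    intro i j
    rw [hK, hdist, Finset.mul_sum, Real.exp_sum]
    refine Finset.prod_congr rfl fun e _ => ?_
    by_cases h1 : σ e i <;> by_cases h2 : σ e j
    · rw [if_neg (by tauto), mul_zero, Real.exp_zero]
      simp only [hx, if_pos h1, if_pos h2]
      ring
    · rw [if_pos (by tauto), mul_one, ← hqdef]
      simp only [hx, if_pos h1, if_neg h2]
      ring
    · rw [if_pos (by tauto), mul_one, ← hqdef]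
      simp only [hx, if_neg h1, if_pos h2]
      ring
    · rw [if_neg (by tauto), mul_zero, Real.exp_zero]
      simp only [hx, if_neg h1, if_neg h2]
      ring
  -- quadratic forms of such edge products are nonnegative
  have quad : ∀ s : Finset (Sym2 V), ∀ v : V → ℝ,
      0 ≤ ∑ i : V, ∑ j : V,
        v i * (∏ e ∈ s, ((1 + q) / 2 + (1 - q) / 2 * x e i * x e j)) * v j := by
    intro s
    induction s using Finset.induction_on with
    | empty =>
      intro v
      simp only [Finset.prod_empty]
      have hsq : ∑ i : V, ∑ j : V, v i * (1:ℝ) * v j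
          = (∑ i : V, v i) * (∑ j : V, v j) := by
        rw [Finset.sum_mul]
        refine Finset.sum_congr rfl fun i _ => ?_
        rw [Finset.mul_sum]
        exact Finset.sum_congr rfl fun j _ => by ring
      rw [hsq]
      exact mul_self_nonneg _
    | @insert a s ha ih =>
      intro v
      have expand : ∀ i j : V,
          v i * (∏ e ∈ insert a s, ((1 + q) / 2 + (1 - q) / 2 * x e i * x e j)) * v j
          = (1 + q) / 2 *
              (v i * (∏ e ∈ s, ((1 + q) / 2 + (1 - q) / 2 * x e i * x e j)) * v j)
            + (1 - q) / 2 *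
              ((x a i * v i) * (∏ e ∈ s, ((1 + q) / 2 + (1 - q) / 2 * x e i * x e j))
                * (x a j * v j)) := by
        intro i j
        rw [Finset.prod_insert ha]; ring
      simp_rw [expand, Finset.sum_add_distrib, ← Finset.mul_sum]
      have hA : (0:ℝ) ≤ (1 + q) / 2 := by linarith
      have hB : (0:ℝ) ≤ (1 - q) / 2 := by linarith
      exact add_nonneg (mul_nonneg hA (ih v)) (mul_nonneg hB (ih fun i => x a i * v i))
  rw [Matrix.posSemidef_iff_dotProduct_mulVec]
  constructor
  · -- Hermitian
    ext i j
    simp only [Matrix.conjTranspose_apply, RCLike.star_def, starRingEnd_apply, star_trivial]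
    rw [hK, hK, SimpleGraph.dist_comm]
  · -- nonneg quadratic form
    intro v
    have hsv : star v = v := by
      funext i
      simp
    have hdot : dotProduct v (K.mulVec v) =
        ∑ i : V, ∑ j : V,
          v i * (∏ e ∈ G.edgeFinset, ((1 + q) / 2 + (1 - q) / 2 * x e i * x e j)) * v j := by
      simp only [dotProduct, Matrix.mulVec]
      refine Finset.sum_congr rfl fun i _ => ?_
      rw [Finset.mul_sum]
      refine Finset.sum_congr rfl fun j _ => ?_
      rw [hprod]; ring
    show 0 ≤ dotProduct (star v) (K.mulVec v)
    rw [hsv, hdot]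
    exact quad G.edgeFinset v
end
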